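/- arXiv:0809.3288 — 3 statements merged into one kernel-verified Lean document; each statement's English description precedes it below -/
import Mathlib

section
/- Calderón–Zygmund size estimate for the random square-function kernel: There is a constant C = C(N) such that for all x ≠ y in ℝ^N, E_ω Σ_{k∈ℤ} |Δ_k^{D(ω)} δ_y(x)|² ≤ C |x−y|^{−2N}; equivalently, the kernel K(x,y) := {Δ_k^{D(ω)} δ_y(x)}_{k∈ℤ, ω∈Ω}, viewed as an element of L²(ℤ×Ω), satisfies ‖K(x,y)‖ ≤ C' |x−y|^{−N}. -/
open MeasureTheory Filter Topology
open scoped ENNReal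

noncomputable section

namespace Treil

/-- The cube of sidelength `2^k` of the dyadic lattice `t + 𝒟₀` that contains `x`. -/
def dcube {N : ℕ} (t : Fin N → ℝ) (k : ℤ) (x : Fin N → ℝ) : Set (Fin N → ℝ) :=
  {y | ∀ i, ⌊(y i - t i) / (2 : ℝ) ^ k⌋ = ⌊(x i - t i) / (2 : ℝ) ^ k⌋}

/-- The averaging operator `E_k` over the cubes of sidelength `2^k` of the (generalized)
dyadic lattice whose layer at scale `2^k` has offset `c k`. -/
def avg {N : ℕ} (c : ℤ → Fin N → ℝ) (k : ℤ) (f : (Fin N → ℝ) → ℝ) (x : Fin N → ℝ) : ℝ :=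
  (∫ y in dcube (c k) k x, f y) / ((2 : ℝ) ^ k) ^ (N : ℕ)

/-- The martingale difference `Δ_k = E_{k-1} - E_k`. -/
def mdiff {N : ℕ} (c : ℤ → Fin N → ℝ) (k : ℤ) (f : (Fin N → ℝ) → ℝ) (x : Fin N → ℝ) : ℝ :=
  avg c (k - 1) f x - avg c k f x

/-- The square of the dyadic square function, `|S_𝒟 f (x)|² = ∑_k |Δ_k f (x)|²`,
with values in `[0,∞]`. -/
def Ssq {N : ℕ} (c : ℤ → Fin N → ℝ) (f : (Fin N → ℝ) → ℝ) (x : Fin N → ℝ) : ℝ≥0∞ :=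
  ∑' k : ℤ, ENNReal.ofReal ((mdiff c k f x) ^ 2)

/-- The offset (at scale `2^k`) of the random dyadic lattice on `ℝ` built from the uniform
shift `u ∈ [0,1)` and the fair signs `ξ_j`, `j ≥ 1`, encoded as the binary digits of
`v ∈ [0,1)` (`ξ_j = -1` iff `⌊v 2^j⌋` is odd); the interval `I_0 = [u-1, u)` belongs to the
lattice, and `I_k` is obtained from `I_{k-1}` by adjoining the right neighbour if `ξ_k = +1`
and the left neighbour if `ξ_k = -1`. -/
def randOffset1 (u v : ℝ) (k : ℤ) : ℝ :=
  u - 1 - ∑ j ∈ Finset.range k.toNat, (if ⌊v * 2 ^ (j + 1)⌋ % 2 = 1 then (2 : ℝ) ^ j else 0)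

/-- The sample space for the random dyadic lattice in `ℝ^N`: each of the `N` independent
coordinate lattices is driven by a pair (uniform shift, digit-encoded fair signs). -/
abbrev RSpace (N : ℕ) := Fin N → ℝ × ℝ

/-- The probability measure of the random dyadic lattice in `ℝ^N`. -/
def randMeasure (N : ℕ) : Measure (RSpace N) :=
  Measure.pi fun _ =>
    (volume.restrict (Set.Ico (0 : ℝ) 1)).prod (volume.restrict (Set.Ico (0 : ℝ) 1))

/-- The per-scale offsets of the random dyadic lattice `𝒟(ω)` in `ℝ^N`. -/
def randOffset {N : ℕ} (ω : RSpace N) (k : ℤ) : Fin N → ℝ :=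
  fun i => randOffset1 (ω i).1 (ω i).2 k

/-- An (axis-parallel, half-open) cube in `ℝ^N`. -/
def IsPCube {N : ℕ} (Q : Set (Fin N → ℝ)) : Prop :=
  ∃ (a : Fin N → ℝ) (l : ℝ), 0 < l ∧ Q = Set.univ.pi fun i => Set.Ico (a i) (a i + l)

/-- An `H¹`-atom: supported in a cube `Q`, bounded by `|Q|⁻¹`, with zero mean. -/
def IsAtom {N : ℕ} (a : (Fin N → ℝ) → ℝ) : Prop :=
  ∃ Q : Set (Fin N → ℝ), IsPCube Q ∧ (∀ x, x ∉ Q → a x = 0) ∧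
    (∀ x, |a x| ≤ ((volume Q).toReal)⁻¹) ∧ (∫ x, a x) = 0

/-- The atomic `H¹(ℝ^N)` norm: the infimum of `∑ |λ_j|` over all decompositions
`f = ∑ λ_j a_j` converging in `L¹`, with atoms `a_j`. -/
def H1norm {N : ℕ} (f : (Fin N → ℝ) → ℝ) : ℝ≥0∞ :=
  ⨅ (lam : ℕ → ℝ) (a : ℕ → (Fin N → ℝ) → ℝ) (_ : ∀ j, IsAtom (a j))
    (_ : Tendsto (fun m => ∫ x, |f x - ∑ j ∈ Finset.range m, lam j * a j x|) atTop (𝓝 0)),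
    ∑' j, ENNReal.ofReal |lam j|
/-- The martingale difference of the unit point mass `δ_y`:
`Δ_k δ_y (x) = 1_{Q'}(y)/|Q'| - 1_Q(y)/|Q|`, where `Q` is the cube of sidelength `2^k`
containing `x` and `Q'` its child containing `x`. -/
def mdiffDelta {N : ℕ} (c : ℤ → Fin N → ℝ) (k : ℤ) (y x : Fin N → ℝ) : ℝ :=
  (dcube (c (k - 1)) (k - 1) x).indicator (fun _ => (((2 : ℝ) ^ (k - 1)) ^ (N : ℕ))⁻¹) y -
    (dcube (c k) k x).indicator (fun _ => (((2 : ℝ) ^ k) ^ (N : ℕ))⁻¹) y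


lemma floor_eq_abs_lt {a b : ℝ} (h : ⌊a⌋ = ⌊b⌋) : |a - b| < 1 := by
  have h1 := Int.floor_le a
  have h2 := Int.lt_floor_add_one a
  have h3 := Int.floor_le b
  have h4 := Int.lt_floor_add_one b
  rw [h] at h1 h2
  rw [abs_sub_lt_iff]; constructor <;> linarith

lemma dist_lt_of_mem_dcube {N : ℕ} {t : Fin N → ℝ} {k : ℤ} {x y : Fin N → ℝ}
    (hy : y ∈ dcube t k x) : dist x y < 2 ^ k := by
  rw [dist_pi_lt_iff (by positivity)]
  intro i
  have h := floor_eq_abs_lt (hy i)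
  have h2 : (0:ℝ) < 2 ^ k := by positivity
  rw [Real.dist_eq]
  have heq : x i - y i = ((x i - t i) / 2 ^ k - (y i - t i) / 2 ^ k) * 2 ^ k := by
    field_simp
    ring
  rw [heq, abs_mul, abs_of_pos h2]
  calc |(x i - t i) / 2 ^ k - (y i - t i) / 2 ^ k| * 2 ^ k < 1 * 2 ^ k := by
        apply mul_lt_mul_of_pos_right _ h2
        rw [abs_sub_comm]; exact h
    _ = 2 ^ k := one_mul _

lemma mdiffDelta_eq_zero {N : ℕ} (c : ℤ → Fin N → ℝ) (k : ℤ) {x y : Fin N → ℝ}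
    (h : (2:ℝ) ^ k ≤ dist x y) : mdiffDelta c k y x = 0 := by
  have h1 : y ∉ dcube (c k) k x := fun hy => absurd (dist_lt_of_mem_dcube hy) (not_lt.2 h)
  have hlt : (2:ℝ) ^ (k-1) < 2 ^ k := zpow_lt_zpow_right₀ one_lt_two (by omega)
  have h2 : y ∉ dcube (c (k-1)) (k-1) x := fun hy => by
    have := dist_lt_of_mem_dcube hy; linarith
  unfold mdiffDelta
  rw [Set.indicator_of_notMem h2, Set.indicator_of_notMem h1, sub_zero]

lemma mdiffDelta_abs_le {N : ℕ} (c : ℤ → Fin N → ℝ) (k : ℤ) (x y : Fin N → ℝ) :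
    |mdiffDelta c k y x| ≤ ((2:ℝ) ^ N + 1) * (((2:ℝ) ^ k) ^ N)⁻¹ := by
  have hkey : (((2:ℝ) ^ (k-1)) ^ N)⁻¹ = 2 ^ N * (((2:ℝ) ^ k) ^ N)⁻¹ := by
    have h2 : ((2:ℝ)^k)^N = ((2:ℝ)^(k-1))^N * 2^N := by
      rw [← mul_pow, ← zpow_add_one₀ (two_ne_zero) (k-1)]; norm_num
    have : ((2:ℝ)^(k-1))^N ≠ 0 := by positivity
    rw [h2]; field_simp
  have hind : ∀ (s : Set (Fin N → ℝ)) (cst : ℝ), 0 ≤ cst →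
      |s.indicator (fun _ => cst) y| ≤ cst := by
    intro s cst hc
    rw [abs_of_nonneg (Set.indicator_nonneg (fun _ _ => hc) y)]
    exact Set.indicator_le_self' (fun _ _ => hc) y
  unfold mdiffDelta
  calc |(dcube (c (k - 1)) (k - 1) x).indicator (fun _ => (((2:ℝ) ^ (k - 1)) ^ N)⁻¹) y -
        (dcube (c k) k x).indicator (fun _ => (((2:ℝ) ^ k) ^ N)⁻¹) y|
      ≤ |(dcube (c (k - 1)) (k - 1) x).indicator (fun _ => (((2:ℝ) ^ (k - 1)) ^ N)⁻¹) y| +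
        |(dcube (c k) k x).indicator (fun _ => (((2:ℝ) ^ k) ^ N)⁻¹) y| := abs_sub _ _
    _ ≤ (((2:ℝ) ^ (k-1)) ^ N)⁻¹ + (((2:ℝ) ^ k) ^ N)⁻¹ := by
        gcongr <;> [exact hind _ _ (by positivity); exact hind _ _ (by positivity)]
    _ = ((2:ℝ) ^ N + 1) * (((2:ℝ) ^ k) ^ N)⁻¹ := by rw [hkey]; ring

lemma zpow_reindex (k₀ : ℤ) (n N : ℕ) :
    ((((2:ℝ)^(k₀+(n:ℤ)))^N)⁻¹)^2 = ((2:ℝ)^(-k₀))^(2*N) * (((4:ℝ)⁻¹)^N)^n := by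
  have h4 : ((4:ℝ)⁻¹) = (2:ℝ)^(-2:ℤ) := by norm_num
  rw [h4, ← zpow_natCast ((2:ℝ)^(k₀+(n:ℤ))) N, ← zpow_mul, ← zpow_neg, ← zpow_natCast _ 2,
      ← zpow_mul, ← zpow_natCast ((2:ℝ)^(-k₀)) (2*N), ← zpow_mul,
      ← zpow_natCast ((2:ℝ)^(-2:ℤ)) N, ← zpow_mul, ← zpow_natCast _ n, ← zpow_mul,
      ← zpow_add₀ (two_ne_zero : (2:ℝ) ≠ 0)]
  congr 1; push_cast; ring

/-- The deterministic pointwise bound. -/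
lemma sum_bound {N : ℕ} (hN : 0 < N) (c : ℤ → Fin N → ℝ) (x y : Fin N → ℝ) (hxy : x ≠ y) :
    (∑' k : ℤ, ENNReal.ofReal ((mdiffDelta c k y x) ^ 2)) ≤
      ENNReal.ofReal ((2 * ((2:ℝ) ^ N + 1) ^ 2) / dist x y ^ (2 * N)) := by
  set d := dist x y with hd
  have hd0 : 0 < d := dist_pos.2 hxy
  set k₀ : ℤ := ⌊Real.logb 2 d⌋ + 1 with hk₀
  have hdlt : d < 2 ^ k₀ := by
    have hlt : Real.logb 2 d < (k₀ : ℝ) := by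
      push_cast [hk₀]; exact Int.lt_floor_add_one _
    calc d = (2:ℝ) ^ (Real.logb 2 d) := (Real.rpow_logb two_pos (by norm_num) hd0).symm
      _ < (2:ℝ) ^ (k₀ : ℝ) := Real.rpow_lt_rpow_of_exponent_lt one_lt_two hlt
      _ = (2:ℝ) ^ k₀ := by rw [← Real.rpow_intCast]
  have hdge : ∀ k : ℤ, k < k₀ → (2:ℝ) ^ k ≤ d := by
    intro k hk
    have h1 : (k : ℝ) ≤ Real.logb 2 d := by
      have : k ≤ ⌊Real.logb 2 d⌋ := by omega
      exact le_trans (by exact_mod_cast this) (Int.floor_le _)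
    calc (2:ℝ) ^ k = (2:ℝ) ^ (k:ℝ) := by rw [← Real.rpow_intCast]
      _ ≤ (2:ℝ) ^ (Real.logb 2 d) := Real.rpow_le_rpow_of_exponent_le one_le_two h1
      _ = d := Real.rpow_logb two_pos (by norm_num) hd0
  set f : ℤ → ℝ≥0∞ := fun k => ENNReal.ofReal ((mdiffDelta c k y x) ^ 2) with hf
  have hinj : Function.Injective (fun n : ℕ => k₀ + (n:ℤ)) := by
    intro a b hab; simpa using hab
  have hsupp : Function.support f ⊆ Set.range (fun n : ℕ => k₀ + (n:ℤ)) := by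
    intro k hk
    rcases lt_or_ge k k₀ with h | h
    · exact absurd (by simp [hf, mdiffDelta_eq_zero c k (hdge k h)]) hk
    · exact ⟨(k - k₀).toNat, by push_cast; omega⟩
  rw [← hinj.tsum_eq hsupp]
  set B : ℝ := ((2:ℝ)^N+1)^2 * (((2:ℝ)^(-k₀))^(2*N)) with hB
  have hB0 : 0 ≤ B := by positivity
  set ρ : ℝ≥0∞ := ENNReal.ofReal (((4:ℝ)⁻¹)^N) with hρ
  have hterm : ∀ n : ℕ, f (k₀ + n) ≤ ENNReal.ofReal B * ρ ^ n := by
    intro n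
    have habs := mdiffDelta_abs_le c (k₀ + n) x y
    have hsq : (mdiffDelta c (k₀ + n) y x) ^ 2 ≤
        (((2:ℝ)^N+1) * (((2:ℝ) ^ (k₀ + (n:ℤ))) ^ N)⁻¹) ^ 2 := by
      rw [← sq_abs]
      exact pow_le_pow_left₀ (abs_nonneg _) habs 2
    have hrw : (((2:ℝ)^N+1) * (((2:ℝ) ^ (k₀ + (n:ℤ))) ^ N)⁻¹) ^ 2 =
        B * (((4:ℝ)⁻¹)^N)^n := by
      rw [mul_pow, zpow_reindex k₀ n N, hB]; ring
    calc f (k₀ + n) ≤ ENNReal.ofReal (B * (((4:ℝ)⁻¹)^N)^n) := by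
          simp only [hf]
          exact ENNReal.ofReal_le_ofReal (hrw ▸ hsq)
      _ = ENNReal.ofReal B * ρ ^ n := by
          rw [ENNReal.ofReal_mul hB0, hρ, ← ENNReal.ofReal_pow (by positivity)]
  have hρle : ρ ≤ 2⁻¹ := by
    calc ρ ≤ ENNReal.ofReal (2⁻¹) := by
          apply ENNReal.ofReal_le_ofReal
          calc ((4:ℝ)⁻¹)^N ≤ ((4:ℝ)⁻¹)^1 :=
                pow_le_pow_of_le_one (by norm_num) (by norm_num) hN
            _ ≤ 2⁻¹ := by norm_num
      _ = 2⁻¹ := by rw [ENNReal.ofReal_inv_of_pos (by norm_num)]; norm_num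
  have hgeo : (1 - ρ)⁻¹ ≤ 2 := by
    rw [← inv_inv (2:ℝ≥0∞)]
    apply ENNReal.inv_le_inv'
    calc (2:ℝ≥0∞)⁻¹ = 1 - 2⁻¹ := by norm_num [ENNReal.one_sub_inv_two]
      _ ≤ 1 - ρ := tsub_le_tsub_left hρle 1
  calc (∑' n : ℕ, f (k₀ + n)) ≤ ∑' n : ℕ, ENNReal.ofReal B * ρ ^ n := ENNReal.tsum_le_tsum hterm
    _ = ENNReal.ofReal B * ∑' n : ℕ, ρ ^ n := ENNReal.tsum_mul_left
    _ = ENNReal.ofReal B * (1 - ρ)⁻¹ := by rw [ENNReal.tsum_geometric]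
    _ ≤ ENNReal.ofReal B * 2 := by exact mul_le_mul_right hgeo _
    _ = ENNReal.ofReal (B * 2) := by
        rw [ENNReal.ofReal_mul hB0]; norm_num
    _ ≤ ENNReal.ofReal ((2 * ((2:ℝ) ^ N + 1) ^ 2) / d ^ (2 * N)) := by
        apply ENNReal.ofReal_le_ofReal
        have hle : ((2:ℝ)^(-k₀))^(2*N) ≤ (d ^ (2*N))⁻¹ := by
          rw [← inv_pow, zpow_neg]
          apply pow_le_pow_left₀ (by positivity)
          exact inv_anti₀ hd0 (le_of_lt hdlt)
        calc B * 2 = 2 * ((2:ℝ)^N+1)^2 * (((2:ℝ)^(-k₀))^(2*N)) := by rw [hB]; ring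
          _ ≤ 2 * ((2:ℝ)^N+1)^2 * (d ^ (2*N))⁻¹ := by gcongr
          _ = (2 * ((2:ℝ) ^ N + 1) ^ 2) / d ^ (2 * N) := by rw [div_eq_mul_inv]

lemma randMeasure_univ (N : ℕ) : randMeasure N Set.univ = 1 := by
  rw [randMeasure, Measure.pi_univ]
  have h1 : ((volume.restrict (Set.Ico (0:ℝ) 1)).prod
      (volume.restrict (Set.Ico (0:ℝ) 1))) Set.univ = 1 := by
    rw [← Set.univ_prod_univ, Measure.prod_prod]
    simp [Real.volume_Ico]
  simp [h1]

/-- **Calderón–Zygmund size estimate for the random square-function kernel**: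
`𝔼_ω ∑_k |Δ_k^{𝒟(ω)} δ_y(x)|² ≤ C(N) |x-y|^{-2N}`. -/
theorem kernel_size (N : ℕ) (hN : 0 < N) :
    ∃ C : ℝ, 0 < C ∧
      ∀ x y : Fin N → ℝ, x ≠ y →
        (∫⁻ ω, (∑' k : ℤ, ENNReal.ofReal ((mdiffDelta (randOffset ω) k y x) ^ 2))
            ∂randMeasure N) ≤
          ENNReal.ofReal (C / dist x y ^ (2 * N)) := by
  refine ⟨2 * ((2:ℝ) ^ N + 1) ^ 2, by positivity, fun x y hxy => ?_⟩
  calc (∫⁻ ω, (∑' k : ℤ, ENNReal.ofReal ((mdiffDelta (randOffset ω) k y x) ^ 2))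
        ∂randMeasure N)
      ≤ ∫⁻ _, ENNReal.ofReal ((2 * ((2:ℝ) ^ N + 1) ^ 2) / dist x y ^ (2 * N)) ∂randMeasure N :=
        lintegral_mono (fun ω => sum_bound hN (randOffset ω) x y hxy)
    _ = ENNReal.ofReal ((2 * ((2:ℝ) ^ N + 1) ^ 2) / dist x y ^ (2 * N)) * randMeasure N Set.univ :=
        lintegral_const _
    _ = ENNReal.ofReal ((2 * ((2:ℝ) ^ N + 1) ^ 2) / dist x y ^ (2 * N)) := by
        rw [randMeasure_univ]; simp


end Treil
end
end

section
/- Per-scale second-moment smoothness estimate: There is a constant C = C(N) such that for all x, x₀, y ∈ ℝ^N and every k ∈ ℤ, E_ω |Δ_k^{D(ω)} δ_y(x) − Δ_k^{D(ω)} δ_y(x₀)|² ≤ C |x−x₀| 2^{−2kN−k}. (This follows since the probability that x and x₀ fail to lie in the same child of the same cube of sidelength 2^k of D(ω) is at most C|x−x₀|2^{−k}, together with the bound |Δ_k^{D(ω)} δ_y(x)| ≤ C 2^{−kN}.) -/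
open MeasureTheory Filter Topology
open scoped ENNReal

noncomputable section

namespace Treil

/-- integer version of the signs sum -/
def intS (m : ℕ) (v : ℝ) : ℤ :=
  ∑ j ∈ Finset.range m, (if ⌊v * 2 ^ (j + 1)⌋ % 2 = 1 then (2 : ℤ) ^ j else 0)

lemma randOffset1_eq (u v : ℝ) (k : ℤ) :
    randOffset1 u v k = u - 1 - (intS k.toNat v : ℝ) := by
  simp only [randOffset1, intS, Int.cast_sum, apply_ite (Int.cast : ℤ → ℝ)]
  push_cast
  ring_nf

lemma intS_nonneg (m : ℕ) (v : ℝ) : 0 ≤ intS m v :=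
  Finset.sum_nonneg fun j _ => by positivity

lemma intS_lt (m : ℕ) (v : ℝ) : intS m v < 2 ^ m := by
  calc intS m v ≤ ∑ j ∈ Finset.range m, (2:ℤ)^j := by
        refine Finset.sum_le_sum fun j _ => ?_
        split <;> simp [pow_nonneg]
    _ < 2 ^ m := by
        have h : ∑ j ∈ Finset.range m, (2:ℤ)^j = 2^m - 1 := by
          induction m with
          | zero => simp
          | succ n ih => rw [Finset.sum_range_succ, ih, pow_succ]; ring
        rw [h]
        have : (0:ℤ) < 2 ^ m := pow_pos (by norm_num) m
        omega

lemma floor_half (x : ℝ) : ⌊x / 2⌋ = ⌊x⌋ / 2 := by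
  have h0 := Int.floor_le x
  have h1 := Int.lt_floor_add_one x
  have h2 := Int.emod_emod_of_dvd (⌊x⌋) (dvd_refl 2)
  have hm : ⌊x⌋ = 2 * (⌊x⌋ / 2) + ⌊x⌋ % 2 := (Int.mul_ediv_add_emod _ _).symm
  have hr0 : (0:ℤ) ≤ ⌊x⌋ % 2 := Int.emod_nonneg _ (by norm_num)
  have hr1 : ⌊x⌋ % 2 < 2 := Int.emod_lt_of_pos _ (by norm_num)
  rw [Int.floor_eq_iff]
  constructor
  · have : ((2 * (⌊x⌋ / 2) : ℤ) : ℝ) ≤ ⌊x⌋ := by exact_mod_cast by omega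
    push_cast at this ⊢
    linarith
  · have : ((⌊x⌋:ℝ)) ≤ 2 * ((⌊x⌋/2 : ℤ):ℝ) + 1 := by exact_mod_cast by omega
    push_cast at this ⊢
    linarith

lemma floor_succ (m : ℕ) (v : ℝ) :
    ⌊v * 2 ^ (m + 1)⌋ = 2 * ⌊v * 2 ^ m⌋ + ⌊v * 2 ^ (m + 1)⌋ % 2 := by
  have h : ⌊v * 2 ^ m⌋ = ⌊v * 2 ^ (m+1)⌋ / 2 := by
    rw [← floor_half]
    ring_nf
  omega

def gfun : ℕ → ℤ → ℤ
  | 0, _ => 0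
  | (m+1), s => 2 * gfun m (s % 2 ^ m) + s / 2 ^ m

lemma floor_eq_gfun (m : ℕ) (v : ℝ) (h0 : 0 ≤ v) (h1 : v < 1) :
    ⌊v * 2 ^ m⌋ = gfun m (intS m v) := by
  induction m with
  | zero => simp [gfun, Int.floor_eq_zero_iff, h0, h1]
  | succ m ih =>
    have hS : intS (m+1) v = intS m v + (if ⌊v * 2 ^ (m + 1)⌋ % 2 = 1 then (2:ℤ)^m else 0) := by
      rw [intS, Finset.sum_range_succ]; rfl
    have hlt := intS_lt m v
    have hnn := intS_nonneg m v
    have hmod : intS (m+1) v % 2 ^ m = intS m v := by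
      rw [hS]
      split
      · rw [show intS m v + (2:ℤ)^m = intS m v + 2^m * 1 by ring,
          Int.add_mul_emod_self_left, Int.emod_eq_of_lt hnn hlt]
      · rw [add_zero, Int.emod_eq_of_lt hnn hlt]
    have hdiv : intS (m+1) v / 2 ^ m = (if ⌊v * 2 ^ (m + 1)⌋ % 2 = 1 then (1:ℤ) else 0) := by
      rw [hS]
      split
      · rw [show intS m v + (2:ℤ)^m = intS m v + 1 * 2^m by ring,
          Int.add_mul_ediv_right _ _ (by positivity : (2:ℤ)^m ≠ 0),
          Int.ediv_eq_zero_of_lt hnn hlt]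
        omega
      · rw [add_zero, Int.ediv_eq_zero_of_lt hnn hlt]
    rw [gfun, hmod, hdiv, ← ih]
    have := floor_succ m v
    have hp : (0:ℤ) ≤ ⌊v * 2 ^ (m+1)⌋ % 2 := Int.emod_nonneg _ (by norm_num)
    have hp2 : ⌊v * 2 ^ (m+1)⌋ % 2 < 2 := Int.emod_lt_of_pos _ (by norm_num)
    split <;> omega

lemma meas_intS (m : ℕ) (s : ℤ) :
    volume ({v : ℝ | intS m v = s} ∩ Set.Ico (0:ℝ) 1) ≤ ENNReal.ofReal (((2:ℝ)^m)⁻¹) := by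
  have hp : (0:ℝ) < 2^m := by positivity
  have hsub : {v : ℝ | intS m v = s} ∩ Set.Ico (0:ℝ) 1 ⊆
      Set.Ico ((gfun m s : ℝ)/2^m) (((gfun m s : ℝ) + 1)/2^m) := by
    rintro v ⟨hv, h0, h1⟩
    have hf : ⌊v * 2^m⌋ = gfun m s := by
      rw [floor_eq_gfun m v h0 h1]
      exact congrArg _ hv
    rw [Int.floor_eq_iff] at hf
    constructor
    · rw [div_le_iff₀ hp]; linarith [hf.1]
    · rw [lt_div_iff₀ hp]; linarith [hf.2]
  calc volume _ ≤ volume (Set.Ico ((gfun m s : ℝ)/2^m) (((gfun m s : ℝ) + 1)/2^m)) :=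
        measure_mono hsub
    _ = ENNReal.ofReal (((2:ℝ)^m)⁻¹) := by
        rw [Real.volume_Ico, div_sub_div_same]
        norm_num

lemma cover (k : ℤ) (γ α d : ℝ) (hd : 0 ≤ d) (hdh : d ≤ (2:ℝ)^k) :
    volume ({w : ℝ | ⌊(γ - w)/(2:ℝ)^k⌋ ≠ ⌊(γ + d - w)/(2:ℝ)^k⌋} ∩
        Set.Ico α (α + (2:ℝ)^(k.toNat))) ≤
      ENNReal.ofReal (((2:ℝ)^((-k).toNat) + 1) * d) := by
  set h : ℝ := (2:ℝ)^k with hh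
  have hpos : (0:ℝ) < h := zpow_pos (by norm_num) k
  set t₀ : ℝ := (γ - α)/h with ht₀
  set M : ℤ := 2^((-k).toNat) with hM
  have hMr : ((M:ℝ)) = (2:ℝ)^((-k).toNat) := by push_cast [hM]; norm_num
  have hLM : (2:ℝ)^(k.toNat) = (M:ℝ) * h := by
    rw [hMr, hh]
    rw [← zpow_natCast (2:ℝ) k.toNat, ← zpow_natCast (2:ℝ) (-k).toNat, ← zpow_add₀ (by norm_num : (2:ℝ) ≠ 0)]
    congr 1
    omega
  set n₁ : ℤ := ⌊t₀⌋ - M + 1 with hn₁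
  set n₂ : ℤ := ⌊t₀⌋ + 1 with hn₂
  have hincl : {w : ℝ | ⌊(γ - w)/h⌋ ≠ ⌊(γ + d - w)/h⌋} ∩ Set.Ico α (α + (2:ℝ)^(k.toNat)) ⊆
      ⋃ n ∈ Finset.Icc n₁ n₂, Set.Ioc (γ - n*h) (γ - n*h + d) := by
    rintro w ⟨hne, hw1, hw2⟩
    set n : ℤ := ⌊(γ + d - w)/h⌋ with hn
    have hmono : ⌊(γ - w)/h⌋ ≤ n := Int.floor_mono (by gcongr <;> linarith)
    have hlt : ⌊(γ - w)/h⌋ < n := lt_of_le_of_ne hmono hne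
    have h1 : (γ - w)/h < n := Int.floor_lt.mp hlt
    have h2 : (n:ℝ) ≤ (γ + d - w)/h := Int.floor_le _
    have hw3 : γ - n*h < w := by
      rw [div_lt_iff₀ hpos] at h1; linarith
    have hw4 : w ≤ γ - n*h + d := by
      rw [le_div_iff₀ hpos] at h2; linarith
    have hub : n ≤ n₂ := by
      have : (γ + d - w)/h ≤ t₀ + 1 := by
        rw [ht₀, div_le_iff₀ hpos]
        have : (γ - α)/h * h = γ - α := div_mul_cancel₀ _ (ne_of_gt hpos)
        nlinarith [hpos]
      have := Int.floor_mono this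
      rwa [Int.floor_add_one] at this
    have hlb : n₁ ≤ n := by
      have hwL : w < α + (M:ℝ)*h := by rw [← hLM]; exact hw2
      have : t₀ - (M:ℝ) < n := by
        rw [ht₀, sub_lt_iff_lt_add, div_lt_iff₀ hpos]  -- (γ-α)/h < n + M
        nlinarith [hw3]
      have := Int.floor_lt.mpr (by push_cast; linarith : t₀ - (M:ℝ) < ((n:ℤ):ℝ))
      rw [Int.floor_sub_intCast] at this
      omega
    exact Set.mem_biUnion (Finset.mem_Icc.mpr ⟨hlb, hub⟩) ⟨hw3, hw4⟩
  calc volume _ ≤ volume (⋃ n ∈ Finset.Icc n₁ n₂, Set.Ioc (γ - n*h) (γ - n*h + d)) :=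
        measure_mono hincl
    _ ≤ ∑ n ∈ Finset.Icc n₁ n₂, volume (Set.Ioc (γ - n*h) (γ - n*h + d)) :=
        measure_biUnion_finset_le _ _
    _ = ∑ n ∈ Finset.Icc n₁ n₂, ENNReal.ofReal d := by
        refine Finset.sum_congr rfl fun n _ => ?_
        rw [Real.volume_Ioc]
        congr 1
        ring
    _ = ((Finset.Icc n₁ n₂).card : ℝ≥0∞) * ENNReal.ofReal d := by
        rw [Finset.sum_const, nsmul_eq_mul]
    _ ≤ ENNReal.ofReal (((2:ℝ)^((-k).toNat) + 1) * d) := by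
        have hcard : (Finset.Icc n₁ n₂).card = (M + 1).toNat := by
          rw [Int.card_Icc]
          congr 1
          omega
        rw [hcard, ENNReal.ofReal_mul (by positivity), ← hMr]
        have hM0 : (0:ℤ) ≤ M + 1 := by positivity
        have hM1 : ((M:ℝ)) + 1 = (((M+1).toNat : ℕ) : ℝ) := by
          have h2 : (((M+1).toNat : ℕ) : ℤ) = M + 1 := Int.toNat_of_nonneg hM0
          exact_mod_cast h2.symm
        rw [hM1, ENNReal.ofReal_natCast]

instance instProbIco : IsProbabilityMeasure ((volume : Measure ℝ).restrict (Set.Ico (0:ℝ) 1)) :=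
  ⟨by simp [Real.volume_Ico]⟩

def Bset (k : ℤ) (a b : ℝ) : Set (ℝ × ℝ) :=
  {p : ℝ × ℝ | ⌊(a - randOffset1 p.1 p.2 k) / (2:ℝ)^k⌋ ≠ ⌊(b - randOffset1 p.1 p.2 k) / (2:ℝ)^k⌋}

lemma measurable_randOffset1 (k : ℤ) : Measurable fun p : ℝ × ℝ => randOffset1 p.1 p.2 k := by
  simp only [randOffset1]
  apply Measurable.sub
  · exact measurable_fst.sub measurable_const
  · apply Finset.measurable_sum
    intro j _
    apply Measurable.ite ?_ measurable_const measurable_const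
    have hgm : Measurable fun p : ℝ × ℝ => ⌊p.2 * 2^(j+1)⌋ % 2 :=
      (measurable_from_top : Measurable fun z : ℤ => z % 2).comp
        ((measurable_snd.mul_const _).floor)
    exact hgm (measurableSet_singleton 1)

lemma measurable_Bset (k : ℤ) (a b : ℝ) : MeasurableSet (Bset k a b) := by
  have f1 : Measurable fun p : ℝ × ℝ => ⌊(a - randOffset1 p.1 p.2 k) / (2:ℝ)^k⌋ :=
    ((measurable_const.sub (measurable_randOffset1 k)).div_const _).floor
  have f2 : Measurable fun p : ℝ × ℝ => ⌊(b - randOffset1 p.1 p.2 k) / (2:ℝ)^k⌋ :=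
    ((measurable_const.sub (measurable_randOffset1 k)).div_const _).floor
  have : Bset k a b = (fun p : ℝ × ℝ => ⌊(a - randOffset1 p.1 p.2 k) / (2:ℝ)^k⌋ -
      ⌊(b - randOffset1 p.1 p.2 k) / (2:ℝ)^k⌋) ⁻¹' ({0}ᶜ) := by
    ext p; simp [Bset, sub_eq_zero]
  rw [this]
  exact (f1.sub f2) (measurableSet_singleton 0).compl

lemma oneD (k : ℤ) (a b : ℝ) (hab : a ≤ b) :
    ((volume.restrict (Set.Ico (0:ℝ) 1)).prod (volume.restrict (Set.Ico (0:ℝ) 1))) (Bset k a b)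
      ≤ ENNReal.ofReal (2 * (b - a) / (2:ℝ)^k) := by
  have hk : (0:ℝ) < (2:ℝ)^k := zpow_pos (by norm_num) k
  by_cases hdh : b - a ≤ (2:ℝ)^k
  swap
  · push_neg at hdh
    calc _ ≤ 1 := prob_le_one
      _ ≤ ENNReal.ofReal (2 * (b - a) / (2:ℝ)^k) := by
          rw [ENNReal.one_le_ofReal, le_div_iff₀ hk]
          linarith
  set m := k.toNat with hm
  set h : ℝ := (2:ℝ)^k with hh
  set d : ℝ := b - a with hd'
  have hd : 0 ≤ d := by linarith
  set γ : ℝ := a + 1 with hγ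
  set W : Set ℝ := {w : ℝ | ⌊(γ - w)/h⌋ ≠ ⌊(γ + d - w)/h⌋} with hW
  have mW : MeasurableSet W := by
    have f1 : Measurable fun w : ℝ => ⌊(γ - w)/h⌋ :=
      ((measurable_const.sub measurable_id).div_const h).floor
    have f2 : Measurable fun w : ℝ => ⌊(γ + d - w)/h⌋ :=
      ((measurable_const.sub measurable_id).div_const h).floor
    have : W = (fun w : ℝ => ⌊(γ - w)/h⌋ - ⌊(γ + d - w)/h⌋) ⁻¹' ({0}ᶜ) := by
      ext w; simp [hW, sub_eq_zero]
    rw [this]; exact (f1.sub f2) (measurableSet_singleton 0).compl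
  set U : ℕ → Set ℝ := fun s => {u : ℝ | (u - (s:ℝ)) ∈ W} with hU
  set V : ℕ → Set ℝ := fun s => {v : ℝ | intS m v = (s:ℤ)} with hV
  have hincl : Bset k a b ⊆ ⋃ s ∈ Finset.range (2^m), (U s) ×ˢ (V s) := by
    intro p hp
    set s0 : ℤ := intS m p.2 with hs0
    have hs0nn := intS_nonneg m p.2
    have hs0lt := intS_lt m p.2
    have hcast : ((s0.toNat : ℕ) : ℝ) = (s0 : ℝ) := by
      exact_mod_cast congrArg (Int.cast : ℤ → ℝ) (Int.toNat_of_nonneg hs0nn)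
    refine Set.mem_iUnion₂.mpr ⟨s0.toNat, Finset.mem_range.mpr ?_, ?_, ?_⟩
    · have : ((s0.toNat : ℤ)) < 2^m := by rwa [Int.toNat_of_nonneg hs0nn]
      exact_mod_cast this
    · show (p.1 - (s0.toNat : ℝ)) ∈ W
      have e1 : γ - (p.1 - (s0.toNat : ℝ)) = a - randOffset1 p.1 p.2 k := by
        rw [randOffset1_eq, hcast, ← hs0, hγ]; ring
      have e2 : γ + d - (p.1 - (s0.toNat : ℝ)) = b - randOffset1 p.1 p.2 k := by
        rw [randOffset1_eq, hcast, ← hs0, hγ, hd']; ring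
      show ⌊(γ - (p.1 - (s0.toNat : ℝ)))/h⌋ ≠ ⌊(γ + d - (p.1 - (s0.toNat : ℝ)))/h⌋
      rw [e1, e2]
      exact hp
    · show intS m p.2 = ((s0.toNat : ℕ) : ℤ)
      rw [Int.toNat_of_nonneg hs0nn]
  calc ((volume.restrict (Set.Ico (0:ℝ) 1)).prod (volume.restrict (Set.Ico (0:ℝ) 1))) (Bset k a b)
      ≤ ∑ s ∈ Finset.range (2^m),
        ((volume.restrict (Set.Ico (0:ℝ) 1)).prod (volume.restrict (Set.Ico (0:ℝ) 1)))
          ((U s) ×ˢ (V s)) :=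
        le_trans (measure_mono hincl) (measure_biUnion_finset_le _ _)
    _ = ∑ s ∈ Finset.range (2^m),
        (volume.restrict (Set.Ico (0:ℝ) 1)) (U s) * (volume.restrict (Set.Ico (0:ℝ) 1)) (V s) := by
        simp_rw [Measure.prod_prod]
    _ ≤ ∑ s ∈ Finset.range (2^m),
        volume (W ∩ Set.Ico (-(s:ℝ)) (1-(s:ℝ))) * ENNReal.ofReal (((2:ℝ)^m)⁻¹) := by
        refine Finset.sum_le_sum fun s _ => ?_
        refine mul_le_mul' ?_ ?_
        ·
          rw [Measure.restrict_apply' measurableSet_Ico]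
          apply le_of_eq
          have : U s ∩ Set.Ico (0:ℝ) 1 =
              (fun u : ℝ => u + (-(s:ℝ))) ⁻¹' (W ∩ Set.Ico (-(s:ℝ)) (1-(s:ℝ))) := by
            ext u
            simp only [Set.mem_inter_iff, Set.mem_preimage, Set.mem_Ico, hU, Set.mem_setOf_eq,
              ← sub_eq_add_neg]
            constructor
            · rintro ⟨h1, h2, h3⟩; exact ⟨h1, by linarith, by linarith⟩
            · rintro ⟨h1, h2, h3⟩; exact ⟨h1, by linarith, by linarith⟩
          rw [this, measure_preimage_add_right]
        · rw [Measure.restrict_apply' measurableSet_Ico]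
          exact meas_intS m (s:ℤ)
    _ = (∑ s ∈ Finset.range (2^m), volume (W ∩ Set.Ico (-(s:ℝ)) (1-(s:ℝ))))
          * ENNReal.ofReal (((2:ℝ)^m)⁻¹) := by
        rw [Finset.sum_mul]
    _ ≤ volume (W ∩ Set.Ico ((1:ℝ) - 2^m) 1) * ENNReal.ofReal (((2:ℝ)^m)⁻¹) := by
        gcongr
        rw [← measure_biUnion_finset ?_ ?_]
        · apply measure_mono
          apply Set.iUnion₂_subset
          intro s hs
          rw [Finset.mem_range] at hs
          have hs' : (s:ℝ) ≤ (2:ℝ)^m - 1 := by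
            have : (s:ℝ) + 1 ≤ ((2^m : ℕ) : ℝ) := by exact_mod_cast hs
            push_cast at this ⊢
            linarith
          refine Set.inter_subset_inter_right W ?_
          apply Set.Ico_subset_Ico <;> [linarith; linarith]
        · intro s hs t ht hst
          refine Set.disjoint_of_subset Set.inter_subset_right Set.inter_subset_right ?_
          rw [Set.Ico_disjoint_Ico]
          rcases lt_or_gt_of_ne hst with hlt | hlt
          · have : (s:ℝ) + 1 ≤ (t:ℝ) := by exact_mod_cast hlt
            calc min (1-(s:ℝ)) (1-(t:ℝ)) ≤ 1-(t:ℝ) := min_le_right _ _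
              _ ≤ -(s:ℝ) := by linarith
              _ ≤ max (-(s:ℝ)) (-(t:ℝ)) := le_max_left _ _
          · have : (t:ℝ) + 1 ≤ (s:ℝ) := by exact_mod_cast hlt
            calc min (1-(s:ℝ)) (1-(t:ℝ)) ≤ 1-(s:ℝ) := min_le_left _ _
              _ ≤ -(t:ℝ) := by linarith
              _ ≤ max (-(s:ℝ)) (-(t:ℝ)) := le_max_right _ _
        · exact fun s _ => mW.inter measurableSet_Ico
    _ ≤ ENNReal.ofReal (((2:ℝ)^((-k).toNat) + 1) * d) * ENNReal.ofReal (((2:ℝ)^m)⁻¹) := by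
        gcongr
        have := cover k γ ((1:ℝ) - 2^m) d hd hdh
        rw [show (1:ℝ) - 2^m + (2:ℝ)^(k.toNat) = 1 by rw [← hm]; ring] at this
        exact this
    _ ≤ ENNReal.ofReal (2 * (b - a) / (2:ℝ)^k) := by
        rw [← ENNReal.ofReal_mul (by positivity)]
        apply ENNReal.ofReal_le_ofReal
        have hm2 : (0:ℝ) < (2:ℝ)^m := by positivity
        have e1 : (2:ℝ)^((-k).toNat) * ((2:ℝ)^(m:ℕ))⁻¹ = ((2:ℝ)^k)⁻¹ := by
          rw [← zpow_natCast (2:ℝ) ((-k).toNat), ← zpow_natCast (2:ℝ) m, ← zpow_neg,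
            ← zpow_add₀ (by norm_num : (2:ℝ) ≠ 0)]
          rw [← zpow_neg]
          congr 1
          simp only [hm]
          omega
        have e2 : ((2:ℝ)^(m:ℕ))⁻¹ ≤ ((2:ℝ)^k)⁻¹ := by
          apply inv_anti₀ hk
          rw [← zpow_natCast (2:ℝ) m]
          apply zpow_le_zpow_right₀ (by norm_num)
          simp only [hm]
          omega
        calc ((2:ℝ)^((-k).toNat) + 1) * d * ((2:ℝ)^m)⁻¹
            = (2:ℝ)^((-k).toNat) * ((2:ℝ)^m)⁻¹ * d + ((2:ℝ)^m)⁻¹ * d := by ring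
          _ ≤ ((2:ℝ)^k)⁻¹ * d + ((2:ℝ)^k)⁻¹ * d := by
              rw [e1]; gcongr
          _ = 2 * (b - a) / (2:ℝ)^k := by rw [hd']; field_simp; ring

lemma oneD' (k : ℤ) (a b : ℝ) :
    ((volume.restrict (Set.Ico (0:ℝ) 1)).prod (volume.restrict (Set.Ico (0:ℝ) 1))) (Bset k a b)
      ≤ ENNReal.ofReal (2 * |b - a| / (2:ℝ)^k) := by
  rcases le_total a b with hab | hba
  · rw [abs_of_nonneg (by linarith)]
    exact oneD k a b hab
  · have hsym : Bset k a b = Bset k b a := by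
      ext p; exact ne_comm
    rw [hsym, abs_of_nonpos (by linarith), neg_sub]
    exact oneD k b a hba

lemma marg {N : ℕ} (i : Fin N) (A : Set (ℝ × ℝ)) :
    randMeasure N (Function.eval i ⁻¹' A) =
      ((volume.restrict (Set.Ico (0:ℝ) 1)).prod (volume.restrict (Set.Ico (0:ℝ) 1))) A := by
  rw [randMeasure, Set.eval_preimage, Measure.pi_pi]
  rw [Finset.prod_eq_single_of_mem i (Finset.mem_univ i) ?_]
  · rw [Function.update_self]
  · intro j _ hj
    rw [Function.update_of_ne hj]
    exact measure_univ

/-- **Per-scale second-moment smoothness estimate**: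
`𝔼_ω |Δ_k^{𝒟(ω)} δ_y(x) - Δ_k^{𝒟(ω)} δ_y(x₀)|² ≤ C(N) |x-x₀| 2^{-2kN-k}`. -/
theorem kernel_per_scale_smoothness (N : ℕ) (hN : 0 < N) :
    ∃ C : ℝ, 0 < C ∧
      ∀ (x x₀ y : Fin N → ℝ) (k : ℤ),
        (∫⁻ ω, ENNReal.ofReal
            ((mdiffDelta (randOffset ω) k y x - mdiffDelta (randOffset ω) k y x₀) ^ 2)
            ∂randMeasure N) ≤
          ENNReal.ofReal (C * dist x x₀ * (2 : ℝ) ^ (-(2 * k * (N : ℤ) + k))) := by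
  refine ⟨24 * N * ((2:ℝ)^(N:ℕ) + 1)^2, by positivity, ?_⟩
  intro x x₀ y k
  set D : ℝ := dist x x₀ with hD
  have hD0 : 0 ≤ D := dist_nonneg
  set Mb : ℝ := (((2 : ℝ) ^ (k-1)) ^ (N : ℕ))⁻¹ + (((2 : ℝ) ^ k) ^ (N : ℕ))⁻¹ with hMb
  have hMb0 : 0 ≤ Mb := by positivity
  set E : ℤ → Fin N → Set (RSpace N) :=
    fun κ i => Function.eval i ⁻¹' (Bset κ (x i) (x₀ i)) with hE
  set Bad : Set (RSpace N) := (⋃ i, E k i) ∪ (⋃ i, E (k-1) i) with hBad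
  have mBad : MeasurableSet Bad := by
    apply MeasurableSet.union <;>
      exact MeasurableSet.iUnion fun i => (measurable_pi_apply i) (measurable_Bset _ _ _)
  -- pointwise bound
  have hind : ∀ (S : Set (Fin N → ℝ)) (c : ℝ), 0 ≤ c →
      0 ≤ S.indicator (fun _ => c) y ∧ S.indicator (fun _ => c) y ≤ c := by
    intro S c hc
    by_cases hy : y ∈ S <;> simp [Set.indicator_apply, hy, hc]
  have habs : ∀ (c : ℤ → Fin N → ℝ) (x' : Fin N → ℝ), |mdiffDelta c k y x'| ≤ Mb := by
    intro c x'
    rw [mdiffDelta, abs_le]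
    have h1 := hind (dcube (c (k-1)) (k-1) x') ((((2 : ℝ) ^ (k-1)) ^ (N : ℕ))⁻¹) (by positivity)
    have h2 := hind (dcube (c k) k x') ((((2 : ℝ) ^ k) ^ (N : ℕ))⁻¹) (by positivity)
    constructor <;> [nlinarith [h1.1, h1.2, h2.1, h2.2]; nlinarith [h1.1, h1.2, h2.1, h2.2]]
  have hpt : ∀ ω : RSpace N,
      ENNReal.ofReal ((mdiffDelta (randOffset ω) k y x - mdiffDelta (randOffset ω) k y x₀) ^ 2) ≤
        Bad.indicator (fun _ => ENNReal.ofReal ((2*Mb)^2)) ω := by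
    intro ω
    by_cases hω : ω ∈ Bad
    · rw [Set.indicator_of_mem hω]
      apply ENNReal.ofReal_le_ofReal
      have ha : |mdiffDelta (randOffset ω) k y x - mdiffDelta (randOffset ω) k y x₀| ≤ 2*Mb := by
        have := abs_sub (mdiffDelta (randOffset ω) k y x) (mdiffDelta (randOffset ω) k y x₀)
        have h1 := habs (randOffset ω) x
        have h2 := habs (randOffset ω) x₀
        calc |mdiffDelta (randOffset ω) k y x - mdiffDelta (randOffset ω) k y x₀|
            ≤ |mdiffDelta (randOffset ω) k y x| + |mdiffDelta (randOffset ω) k y x₀| :=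
              abs_sub _ _
          _ ≤ 2*Mb := by linarith
      rw [abs_le] at ha
      nlinarith [ha.1, ha.2, hMb0]
    · rw [Set.indicator_of_notMem hω]
      have hk' : ∀ i, ⌊(x i - randOffset ω k i)/(2:ℝ)^k⌋ = ⌊(x₀ i - randOffset ω k i)/(2:ℝ)^k⌋ := by
        intro i
        by_contra hne
        exact hω (Or.inl (Set.mem_iUnion.mpr ⟨i, hne⟩))
      have hk1' : ∀ i, ⌊(x i - randOffset ω (k-1) i)/(2:ℝ)^(k-1)⌋ =
          ⌊(x₀ i - randOffset ω (k-1) i)/(2:ℝ)^(k-1)⌋ := by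
        intro i
        by_contra hne
        exact hω (Or.inr (Set.mem_iUnion.mpr ⟨i, hne⟩))
      have hc1 : dcube (randOffset ω k) k x = dcube (randOffset ω k) k x₀ := by
        unfold dcube; ext z
        exact forall_congr' fun i => by rw [hk' i]
      have hc2 : dcube (randOffset ω (k-1)) (k-1) x = dcube (randOffset ω (k-1)) (k-1) x₀ := by
        unfold dcube; ext z
        exact forall_congr' fun i => by rw [hk1' i]
      rw [mdiffDelta, mdiffDelta, hc1, hc2]
      simp
  -- measure of Bad
  have hEbound : ∀ (κ : ℤ) (i : Fin N),
      randMeasure N (E κ i) ≤ ENNReal.ofReal (2 * D / (2:ℝ)^κ) := by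
    intro κ i
    rw [hE, marg]
    refine le_trans (oneD' κ (x i) (x₀ i)) (ENNReal.ofReal_le_ofReal ?_)
    have : |x₀ i - x i| ≤ D := by
      rw [abs_sub_comm, ← Real.dist_eq]
      exact dist_le_pi_dist x x₀ i
    have hκ : (0:ℝ) < (2:ℝ)^κ := zpow_pos (by norm_num) κ
    gcongr
  have hBadBound : randMeasure N Bad ≤
      (N : ℝ≥0∞) * ENNReal.ofReal (2 * D / (2:ℝ)^k)
        + (N : ℝ≥0∞) * ENNReal.ofReal (2 * D / (2:ℝ)^(k-1)) := by
    refine le_trans (measure_union_le _ _) ?_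
    gcongr
    · refine le_trans (measure_iUnion_le _) ?_
      calc ∑' i : Fin N, randMeasure N (E k i)
          ≤ ∑' _ : Fin N, ENNReal.ofReal (2 * D / (2:ℝ)^k) :=
            ENNReal.tsum_le_tsum fun i => hEbound k i
        _ = (N : ℝ≥0∞) * ENNReal.ofReal (2 * D / (2:ℝ)^k) := by
            rw [tsum_fintype]
            simp [Finset.sum_const, Finset.card_univ, nsmul_eq_mul]
    · refine le_trans (measure_iUnion_le _) ?_
      calc ∑' i : Fin N, randMeasure N (E (k-1) i)
          ≤ ∑' _ : Fin N, ENNReal.ofReal (2 * D / (2:ℝ)^(k-1)) :=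
            ENNReal.tsum_le_tsum fun i => hEbound (k-1) i
        _ = (N : ℝ≥0∞) * ENNReal.ofReal (2 * D / (2:ℝ)^(k-1)) := by
            rw [tsum_fintype]
            simp [Finset.sum_const, Finset.card_univ, nsmul_eq_mul]
  -- put together
  calc (∫⁻ ω, ENNReal.ofReal
            ((mdiffDelta (randOffset ω) k y x - mdiffDelta (randOffset ω) k y x₀) ^ 2)
            ∂randMeasure N)
      ≤ ∫⁻ ω, Bad.indicator (fun _ => ENNReal.ofReal ((2*Mb)^2)) ω ∂randMeasure N :=
        lintegral_mono hpt
    _ = ENNReal.ofReal ((2*Mb)^2) * randMeasure N Bad := by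
        rw [lintegral_indicator mBad, setLIntegral_const]
    _ ≤ ENNReal.ofReal ((2*Mb)^2) *
        ((N : ℝ≥0∞) * ENNReal.ofReal (2 * D / (2:ℝ)^k)
          + (N : ℝ≥0∞) * ENNReal.ofReal (2 * D / (2:ℝ)^(k-1))) := by
        gcongr
    _ ≤ ENNReal.ofReal (24 * N * ((2:ℝ)^(N:ℕ) + 1)^2 * D * (2:ℝ)^(-(2 * k * (N:ℤ) + k))) := by
        rw [← ENNReal.ofReal_natCast N, ← ENNReal.ofReal_mul (by positivity),
          ← ENNReal.ofReal_mul (by positivity), ← ENNReal.ofReal_add (by positivity) (by positivity),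
          ← ENNReal.ofReal_mul (by positivity)]
        apply ENNReal.ofReal_le_ofReal
        -- real arithmetic
        have h2k : (0:ℝ) < (2:ℝ)^k := zpow_pos (by norm_num) k
        have hR : (0:ℝ) < (2:ℝ)^(k*(N:ℤ)) := zpow_pos (by norm_num) _
        have e0 : (((2 : ℝ) ^ k) ^ (N : ℕ)) = (2:ℝ)^(k*(N:ℤ)) := by
          rw [← zpow_natCast ((2:ℝ)^k) N, ← zpow_mul]
        have e1 : (((2 : ℝ) ^ (k-1)) ^ (N : ℕ)) = (2:ℝ)^((k-1)*(N:ℤ)) := by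
          rw [← zpow_natCast ((2:ℝ)^(k-1)) N, ← zpow_mul]
        have e2 : (2:ℝ)^((k-1)*(N:ℤ)) = (2:ℝ)^(k*(N:ℤ)) / (2:ℝ)^(N:ℕ) := by
          rw [show (k-1)*(N:ℤ) = k*(N:ℤ) - (N:ℤ) by ring,
            zpow_sub₀ (by norm_num : (2:ℝ) ≠ 0), zpow_natCast]
        have e3 : (2:ℝ)^(k-1) = (2:ℝ)^k / 2 := by
          rw [zpow_sub₀ (by norm_num : (2:ℝ) ≠ 0), zpow_one]
        have e4 : (2:ℝ)^(-(2 * k * (N:ℤ) + k)) =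
            (((2:ℝ)^(k*(N:ℤ)) * (2:ℝ)^(k*(N:ℤ))) * (2:ℝ)^k)⁻¹ := by
          rw [zpow_neg, show 2 * k * (N:ℤ) + k = (k*(N:ℤ)) + ((k*(N:ℤ)) + k) by ring,
            zpow_add₀ (by norm_num : (2:ℝ) ≠ 0), zpow_add₀ (by norm_num : (2:ℝ) ≠ 0)]
          ring_nf
        rw [hMb, e0, e1, e2, e3, e4]
        have hTN : (0:ℝ) < (2:ℝ)^(N:ℕ) := by positivity
        apply le_of_eq
        field_simp
        ring

end Treil
end
end

section
/- Equivalence of the two dyadic square-function norms: There is a constant C depending only on N such that for every dyadic lattice D in ℝ^N and every f ∈ L¹_loc(ℝ^N), C^{−1} ‖S_D f‖_{L¹} ≤ ‖S̃_D f‖_{L¹} ≤ C ‖S_D f‖_{L¹}. -/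
open MeasureTheory Filter Topology
open scoped ENNReal

noncomputable section

namespace Treil

/-- The square of the square function `S̃_𝒟`, `|S̃_𝒟 f (x)|² = ∑_k (E_k |Δ_k f|²)(x)`. -/
def StildeSq {N : ℕ} (c : ℤ → Fin N → ℝ) (f : (Fin N → ℝ) → ℝ) (x : Fin N → ℝ) : ℝ≥0∞ :=
  ∑' k : ℤ, ENNReal.ofReal (avg c k (fun y => (mdiff c k f y) ^ 2) x)

set_option maxHeartbeats 1000000

section Aux
variable {N : ℕ}

/-- index (floor vector) of the cube of generation `k` containing `x`. -/
def aIdx (t : Fin N → ℝ) (k : ℤ) (x : Fin N → ℝ) : Fin N → ℤ :=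
  fun i => ⌊(x i - t i) / (2 : ℝ) ^ k⌋

lemma mem_dcube {t : Fin N → ℝ} {k : ℤ} {x y : Fin N → ℝ} :
    y ∈ dcube t k x ↔ aIdx t k y = aIdx t k x := by
  simp only [dcube, Set.mem_setOf_eq, aIdx, funext_iff]

lemma dcube_self (t : Fin N → ℝ) (k : ℤ) (x : Fin N → ℝ) : x ∈ dcube t k x := fun i => rfl

lemma floor_div_nat' (z : ℝ) (n : ℕ) (hn : 0 < n) : ⌊z / (n : ℝ)⌋ = ⌊z⌋ / (n : ℤ) := by
  have hn' : (0:ℝ) < (n:ℝ) := by exact_mod_cast hn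
  have hnz : (n:ℤ) ≠ 0 := by exact_mod_cast hn.ne'
  refine Int.floor_eq_iff.mpr ⟨?_, ?_⟩
  · rw [le_div_iff₀ hn']
    have h1 : ((⌊z⌋ / (n:ℤ)) * (n:ℤ) : ℤ) ≤ ⌊z⌋ := Int.ediv_mul_le _ hnz
    have h2 : (((⌊z⌋ / (n:ℤ)) * (n:ℤ) : ℤ) : ℝ) ≤ z := le_trans (by exact_mod_cast h1) (Int.floor_le z)
    calc (↑(⌊z⌋ / (n:ℤ)) * (n:ℝ)) = (((⌊z⌋ / (n:ℤ)) * (n:ℤ) : ℤ) : ℝ) := by push_cast; ring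
    _ ≤ z := h2
  · rw [div_lt_iff₀ hn']
    have h1 : ⌊z⌋ < (⌊z⌋ / (n:ℤ) + 1) * (n:ℤ) := Int.lt_ediv_add_one_mul_self _ (by exact_mod_cast hn)
    have h2 : z < (((⌊z⌋ / (n:ℤ) + 1) * (n:ℤ) : ℤ) : ℝ) := by
      calc z < ⌊z⌋ + 1 := Int.lt_floor_add_one z
      _ ≤ _ := by exact_mod_cast h1
    calc z < (((⌊z⌋ / (n:ℤ) + 1) * (n:ℤ) : ℤ) : ℝ) := h2
    _ = (↑(⌊z⌋ / (n:ℤ)) + 1) * (n:ℝ) := by push_cast; ring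

lemma aIdx_coord {k k' : ℤ} (h : k ≤ k') (t : Fin N → ℝ) (x : Fin N → ℝ) (i : Fin N) :
    aIdx t k' x i = aIdx t k x i / (2 ^ ((k' - k).toNat) : ℤ) := by
  have hsplit : (x i - t i) / (2:ℝ)^k' = ((x i - t i) / (2:ℝ)^k) / ((2 ^ ((k'-k).toNat) : ℕ) : ℝ) := by
    rw [div_div]
    congr 1
    push_cast
    rw [← zpow_natCast (2:ℝ) ((k'-k).toNat), ← zpow_add₀ (two_ne_zero)]
    congr 1
    omega
  unfold aIdx
  rw [hsplit, floor_div_nat' _ _ (by positivity)]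
  norm_num

lemma aIdx_det {k k' : ℤ} (h : k ≤ k') {t : Fin N → ℝ} {x y : Fin N → ℝ}
    (hxy : aIdx t k y = aIdx t k x) : aIdx t k' y = aIdx t k' x :=
  funext fun i => by rw [aIdx_coord h, aIdx_coord h, hxy]

lemma dcube_mono {k k' : ℤ} (h : k ≤ k') (t : Fin N → ℝ) (x : Fin N → ℝ) :
    dcube t k x ⊆ dcube t k' x :=
  fun y hy => mem_dcube.mpr (aIdx_det h (mem_dcube.mp hy))

lemma dcube_eq_of_mem {t : Fin N → ℝ} {k : ℤ} {x y : Fin N → ℝ} (h : y ∈ dcube t k x) :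
    dcube t k y = dcube t k x :=
  Set.ext fun z => by rw [mem_dcube, mem_dcube, mem_dcube.mp h]

lemma dcube_pi (t : Fin N → ℝ) (k : ℤ) (x : Fin N → ℝ) :
    dcube t k x = Set.univ.pi fun i =>
      Set.Ico (t i + (2:ℝ)^k * (aIdx t k x i)) (t i + (2:ℝ)^k * (aIdx t k x i + 1)) := by
  have hpos : (0:ℝ) < (2:ℝ)^k := by positivity
  ext y
  simp only [dcube, Set.mem_setOf_eq, Set.mem_pi, Set.mem_univ, true_implies, Set.mem_Ico]
  refine forall_congr' fun i => ?_
  rw [Int.floor_eq_iff, le_div_iff₀ hpos, div_lt_iff₀ hpos]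
  show ((aIdx t k x i : ℝ) * 2^k ≤ y i - t i ∧ y i - t i < ((aIdx t k x i : ℝ) + 1) * 2^k) ↔ _
  constructor
  · rintro ⟨h1, h2⟩; constructor <;> nlinarith
  · rintro ⟨h1, h2⟩; constructor <;> nlinarith

lemma measurableSet_dcube (t : Fin N → ℝ) (k : ℤ) (x : Fin N → ℝ) :
    MeasurableSet (dcube t k x) := by
  rw [dcube_pi]; exact MeasurableSet.univ_pi fun i => measurableSet_Ico

lemma volume_dcube (t : Fin N → ℝ) (k : ℤ) (x : Fin N → ℝ) :
    volume (dcube t k x) = ENNReal.ofReal (((2:ℝ)^k) ^ (N:ℕ)) := by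
  rw [dcube_pi, volume_pi_pi]
  have : ∀ i : Fin N, volume (Set.Ico (t i + (2:ℝ)^k * (aIdx t k x i))
      (t i + (2:ℝ)^k * (aIdx t k x i + 1))) = ENNReal.ofReal ((2:ℝ)^k) := by
    intro i; rw [Real.volume_Ico]; congr 1; ring
  simp only [this, Finset.prod_const, Finset.card_univ, Fintype.card_fin]
  rw [← ENNReal.ofReal_pow (by positivity)]

lemma measurableSet_piInt (S : Set (Fin N → ℤ)) : MeasurableSet S := by
  have h1 : ∀ v : Fin N → ℤ, MeasurableSet ({v} : Set (Fin N → ℤ)) := by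
    intro v
    have : ({v} : Set (Fin N → ℤ)) = ⋂ i, (fun w : Fin N → ℤ => w i) ⁻¹' {v i} := by
      ext w; simp [funext_iff]
    rw [this]
    exact MeasurableSet.iInter fun i => (measurable_pi_apply i) (measurableSet_singleton _)
  have h2 : S = ⋃ v ∈ S, {v} := by simp
  rw [h2]; exact MeasurableSet.biUnion (Set.to_countable S) fun v _ => h1 v

lemma measurable_fromPiInt {β : Type*} [MeasurableSpace β] (F : (Fin N → ℤ) → β) :
    Measurable F := fun s _ => measurableSet_piInt _

lemma measurable_aIdx (t : Fin N → ℝ) (k : ℤ) : Measurable (aIdx t k) :=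
  measurable_pi_lambda _ fun i =>
    Int.measurable_floor.comp (((measurable_pi_apply i).sub measurable_const).div_const _)

lemma measurable_comp_aIdx {β : Type*} [MeasurableSpace β] (t : Fin N → ℝ) (k : ℤ)
    (F : (Fin N → ℤ) → β) : Measurable (fun x => F (aIdx t k x)) :=
  (measurable_fromPiInt F).comp (measurable_aIdx t k)

lemma avg_comp (t : Fin N → ℝ) (k : ℤ) (g : (Fin N → ℝ) → ℝ) (x : Fin N → ℝ) :
    avg (fun _ => t) k g x
      = (∫ y in {z | aIdx t k z = aIdx t k x}, g y) / ((2:ℝ)^k) ^ (N:ℕ) := by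
  have hset : dcube t k x = {z | aIdx t k z = aIdx t k x} := Set.ext fun z => mem_dcube
  show (∫ y in dcube t k x, g y) / ((2:ℝ)^k) ^ (N:ℕ) = _
  rw [hset]

lemma measurable_avg (t : Fin N → ℝ) (k : ℤ) (g : (Fin N → ℝ) → ℝ) :
    Measurable (avg (fun _ => t) k g) := by
  have : avg (fun _ => t) k g =
      fun x => (fun v => (∫ y in {z | aIdx t k z = v}, g y) / ((2:ℝ)^k) ^ (N:ℕ)) (aIdx t k x) := by
    funext x; exact avg_comp t k g x
  rw [this]
  exact measurable_comp_aIdx t k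
    (fun v => (∫ y in {z | aIdx t k z = v}, g y) / ((2:ℝ)^k) ^ (N:ℕ))

lemma measurable_mdiff (t : Fin N → ℝ) (k : ℤ) (g : (Fin N → ℝ) → ℝ) :
    Measurable (mdiff (fun _ => t) k g) :=
  (measurable_avg t (k-1) g).sub (measurable_avg t k g)

lemma avg_congr {t : Fin N → ℝ} {k : ℤ} {x y : Fin N → ℝ} (g : (Fin N → ℝ) → ℝ)
    (h : aIdx t k y = aIdx t k x) : avg (fun _ => t) k g y = avg (fun _ => t) k g x := by
  rw [avg_comp, avg_comp, h]

lemma mdiff_congr {t : Fin N → ℝ} {k : ℤ} {x y : Fin N → ℝ} (g : (Fin N → ℝ) → ℝ)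
    (h : aIdx t (k-1) y = aIdx t (k-1) x) :
    mdiff (fun _ => t) k g y = mdiff (fun _ => t) k g x := by
  unfold mdiff
  rw [avg_congr g h, avg_congr g (aIdx_det (by omega) h)]

/-- reference point of a cube. -/
def aRep (t : Fin N → ℝ) (k : ℤ) (v : Fin N → ℤ) : Fin N → ℝ := fun i => t i + (2:ℝ)^k * v i

lemma aIdx_aRep (t : Fin N → ℝ) (k : ℤ) (v : Fin N → ℤ) : aIdx t k (aRep t k v) = v := by
  funext i
  unfold aIdx aRep
  rw [show t i + (2:ℝ)^k * v i - t i = (2:ℝ)^k * (v i) by ring,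
    mul_div_cancel_left₀ _ (by positivity : ((2:ℝ)^k) ≠ 0), Int.floor_intCast]

lemma child_idx_mem {t : Fin N → ℝ} {k : ℤ} {x : Fin N → ℝ} (y : Fin N → ℝ)
    (hy : y ∈ dcube t k x) (i : Fin N) :
    aIdx t (k-1) y i = 2 * aIdx t k x i ∨ aIdx t (k-1) y i = 2 * aIdx t k x i + 1 := by
  have h := aIdx_coord (show k-1 ≤ k by omega) t y i
  have h2 : aIdx t k y = aIdx t k x := mem_dcube.mp hy
  have h3 : (k - (k-1)).toNat = 1 := by omega
  rw [h3, h2] at h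
  norm_num at h
  omega

lemma integrableOn_mdiff_sq (t : Fin N → ℝ) (k : ℤ) (g : (Fin N → ℝ) → ℝ) (x : Fin N → ℝ) :
    IntegrableOn (fun y => (mdiff (fun _ => t) k g y)^2) (dcube t k x) volume := by
  classical
  obtain ⟨C, hC⟩ : ∃ C : ℝ, ∀ y ∈ dcube t k x, (mdiff (fun _ => t) k g y)^2 ≤ C := by
    set Sfin : Finset (Fin N → ℤ) :=
      Fintype.piFinset (fun i => {2 * aIdx t k x i, 2 * aIdx t k x i + 1}) with hS
    have hmem : ∀ y ∈ dcube t k x, aIdx t (k-1) y ∈ Sfin := fun y hy =>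
      Fintype.mem_piFinset.mpr fun i => by
        rcases child_idx_mem y hy i with h | h <;> simp [hS, h]
    have hne : Sfin.Nonempty := ⟨_, hmem x (dcube_self t k x)⟩
    set F : (Fin N → ℤ) → ℝ := fun v => (mdiff (fun _ => t) k g (aRep t (k-1) v))^2 with hF
    refine ⟨Sfin.sup' hne F, fun y hy => ?_⟩
    have he : (mdiff (fun _ => t) k g y)^2 = F (aIdx t (k-1) y) := by
      rw [hF]
      exact congrArg (fun r => r^2) (mdiff_congr g (aIdx_aRep t (k-1) _)).symm
    rw [he]
    exact Finset.le_sup' F (hmem y hy)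
  refine Integrable.mono' (g := fun _ => C) (integrableOn_const ?_) ?_ ?_
  · rw [volume_dcube]; exact ENNReal.ofReal_ne_top
  · exact ((measurable_mdiff t k g).pow_const 2).aestronglyMeasurable
  · refine (ae_restrict_iff' (measurableSet_dcube t k x)).mpr (ae_of_all _ fun y hy => ?_)
    rw [Real.norm_eq_abs, abs_of_nonneg (sq_nonneg _)]
    exact hC y hy

lemma le_avg_sq (t : Fin N → ℝ) (k : ℤ) (g : (Fin N → ℝ) → ℝ) (x : Fin N → ℝ) :
    (mdiff (fun _ => t) k g x)^2
      ≤ (2:ℝ)^(N:ℕ) * avg (fun _ => t) k (fun y => (mdiff (fun _ => t) k g y)^2) x := by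
  set q : (Fin N → ℝ) → ℝ := fun y => (mdiff (fun _ => t) k g y)^2 with hq
  have hpos : (0:ℝ) < ((2:ℝ)^k)^(N:ℕ) := by positivity
  have h1 : ∫ y in dcube t (k-1) x, q y = ((2:ℝ)^(k-1))^(N:ℕ) * q x := by
    rw [setIntegral_congr_fun (g := fun _ => q x) (measurableSet_dcube t (k-1) x)
      (fun y hy => by rw [hq]; exact congrArg (fun r => r^2) (mdiff_congr g (mem_dcube.mp hy))),
      setIntegral_const, measureReal_def, volume_dcube, ENNReal.toReal_ofReal (by positivity), smul_eq_mul]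
  have h2 : ∫ y in dcube t (k-1) x, q y ≤ ∫ y in dcube t k x, q y :=
    setIntegral_mono_set (integrableOn_mdiff_sq t k g x)
      (Filter.Eventually.of_forall fun y => sq_nonneg _)
      (HasSubset.Subset.eventuallyLE (dcube_mono (by omega) t x))
  have hkey : ((2:ℝ)^k)^(N:ℕ) = (2:ℝ)^(N:ℕ) * ((2:ℝ)^(k-1))^(N:ℕ) := by
    rw [← mul_pow]; congr 1
    rw [show k = (k-1)+1 by ring, zpow_add_one₀ (two_ne_zero : (2:ℝ) ≠ 0)]
    ring_nf
  have havg : avg (fun _ => t) k q x = (∫ y in dcube t k x, q y)/((2:ℝ)^k)^(N:ℕ) := rfl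
  rw [havg, ← mul_div_assoc, le_div_iff₀ hpos]
  calc q x * ((2:ℝ)^k)^(N:ℕ) = (2:ℝ)^(N:ℕ) * (((2:ℝ)^(k-1))^(N:ℕ) * q x) := by
        rw [hkey]; ring
  _ ≤ (2:ℝ)^(N:ℕ) * ∫ y in dcube t k x, q y := by
        apply mul_le_mul_of_nonneg_left _ (by positivity)
        rw [← h1]; exact h2

lemma easy_pointwise (t : Fin N → ℝ) (k : ℤ) (g : (Fin N → ℝ) → ℝ) (x : Fin N → ℝ) :
    ENNReal.ofReal ((mdiff (fun _ => t) k g x)^2)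
      ≤ (2:ℝ≥0∞)^(N:ℕ)
        * ENNReal.ofReal (avg (fun _ => t) k (fun y => (mdiff (fun _ => t) k g y)^2) x) := by
  calc ENNReal.ofReal ((mdiff (fun _ => t) k g x)^2)
      ≤ ENNReal.ofReal ((2:ℝ)^(N:ℕ)
          * avg (fun _ => t) k (fun y => (mdiff (fun _ => t) k g y)^2) x) :=
        ENNReal.ofReal_le_ofReal (le_avg_sq t k g x)
  _ = ENNReal.ofReal ((2:ℝ)^(N:ℕ)) * ENNReal.ofReal _ := ENNReal.ofReal_mul (by positivity)
  _ = (2:ℝ≥0∞)^(N:ℕ) * ENNReal.ofReal _ := by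
        rw [ENNReal.ofReal_pow (by norm_num), ENNReal.ofReal_ofNat]

lemma Ssq_le_StildeSq (t : Fin N → ℝ) (g : (Fin N → ℝ) → ℝ) (x : Fin N → ℝ) :
    Ssq (fun _ => t) g x ≤ (2:ℝ≥0∞)^(N:ℕ) * StildeSq (fun _ => t) g x := by
  unfold Ssq StildeSq
  rw [← ENNReal.tsum_mul_left]
  exact Summable.tsum_le_tsum (fun k => easy_pointwise t k g x) ENNReal.summable ENNReal.summable

/-! ### Hard direction machinery -/

variable (t : Fin N → ℝ) (f : (Fin N → ℝ) → ℝ)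

def Gf (k : ℤ) (x : Fin N → ℝ) : ℝ≥0∞ := ENNReal.ofReal ((mdiff (fun _ => t) k f x)^2)

def Tf (k : ℤ) (x : Fin N → ℝ) : ℝ≥0∞ := ∑' l : ℤ, if k ≤ l then Gf t f l x else 0

def pw (j : ℤ) : ℝ≥0∞ := ENNReal.ofReal ((2:ℝ)^j)

lemma pw_pos (j : ℤ) : 0 < pw j := ENNReal.ofReal_pos.mpr (by positivity)

lemma pw_ne_top (j : ℤ) : pw j ≠ ∞ := ENNReal.ofReal_ne_top

lemma pw_add (a b : ℤ) : pw (a+b) = pw a * pw b := by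
  unfold pw
  rw [← ENNReal.ofReal_mul (by positivity), ← zpow_add₀ (two_ne_zero : (2:ℝ) ≠ 0)]

lemma pw_mono {a b : ℤ} (h : a ≤ b) : pw a ≤ pw b :=
  ENNReal.ofReal_le_ofReal (zpow_le_zpow_right₀ (by norm_num) h)

lemma measurable_Gf (k : ℤ) : Measurable (Gf t f k) :=
  ENNReal.measurable_ofReal.comp ((measurable_mdiff t k f).pow_const 2)

lemma measurable_Tf (k : ℤ) : Measurable (Tf t f k) := by
  unfold Tf
  exact Measurable.ennreal_tsum fun l => by
    by_cases h : k ≤ l <;> simp only [h, if_true, if_false]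
    exacts [measurable_Gf t f l, measurable_const]

lemma Ssq_eq (x : Fin N → ℝ) : Ssq (fun _ => t) f x = ∑' k : ℤ, Gf t f k x := rfl

lemma measurable_Ssq : Measurable (Ssq (fun _ => t) f) := by
  have : Ssq (fun _ => t) f = fun x => ∑' k : ℤ, Gf t f k x := funext fun x => Ssq_eq t f x
  rw [this]
  exact Measurable.ennreal_tsum fun k => measurable_Gf t f k

lemma Tf_le_Ssq (k : ℤ) (x : Fin N → ℝ) : Tf t f k x ≤ Ssq (fun _ => t) f x := by
  rw [Ssq_eq]
  exact Summable.tsum_le_tsum (fun l => by by_cases h : k ≤ l <;> simp [h])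
    ENNReal.summable ENNReal.summable

lemma Gf_le_Tf (k : ℤ) (x : Fin N → ℝ) : Gf t f k x ≤ Tf t f k x := by
  have := ENNReal.le_tsum (f := fun l : ℤ => if k ≤ l then Gf t f l x else 0) k
  simpa [Tf] using this

lemma Tf_congr {k : ℤ} {x y : Fin N → ℝ} (h : aIdx t (k-1) y = aIdx t (k-1) x) :
    Tf t f k y = Tf t f k x := by
  unfold Tf
  refine tsum_congr fun l => ?_
  by_cases hl : k ≤ l
  · simp only [hl, if_true]
    unfold Gf
    rw [mdiff_congr f (aIdx_det (by omega) h)]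
  · simp [hl]

lemma sqrt_mul_self (u : ℝ≥0∞) : u^(1/2:ℝ) * u^(1/2:ℝ) = u := by
  rcases eq_or_ne u 0 with rfl | h0
  · rw [ENNReal.zero_rpow_of_pos (by norm_num)]; simp
  rcases eq_or_ne u ∞ with rfl | htop
  · rw [ENNReal.top_rpow_of_pos (by norm_num)]; simp
  · rw [← ENNReal.rpow_add _ _ h0 htop]; norm_num

lemma sqrt_sq' (u : ℝ≥0∞) : (u*u)^(1/2:ℝ) = u := by
  have h : u*u = u^(2:ℝ) := by
    rw [show ((2:ℝ)) = ((2:ℕ):ℝ) by norm_num, ENNReal.rpow_natCast, pow_two]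
  rw [h, ← ENNReal.rpow_mul]
  norm_num

lemma lt_sqrt_of_sq_lt {j : ℤ} {u : ℝ≥0∞} (h : pw (2*j) < u) : pw j < u^(1/2:ℝ) := by
  by_contra hle
  push_neg at hle
  have : u ≤ pw (2*j) := by
    calc u = u^(1/2:ℝ) * u^(1/2:ℝ) := (sqrt_mul_self u).symm
    _ ≤ pw j * pw j := mul_le_mul' hle hle
    _ = pw (2*j) := by rw [← pw_add]; ring_nf
  exact absurd h (not_lt.mpr this)

lemma sq_le_of_sqrt_le {j : ℤ} {u : ℝ≥0∞} (h : u^(1/2:ℝ) ≤ pw j) : u ≤ pw (2*j) := by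
  calc u = u^(1/2:ℝ) * u^(1/2:ℝ) := (sqrt_mul_self u).symm
  _ ≤ pw j * pw j := mul_le_mul' h h
  _ = pw (2*j) := by rw [← pw_add]; ring_nf

lemma exists_greatest_pw (m : ℤ) (hm : 0 < m) (a : ℝ≥0∞) (h0 : a ≠ 0) (hfin : a ≠ ∞) :
    ∃ j₀ : ℤ, pw (m*j₀) < a ∧ ∀ j : ℤ, pw (m*j) < a → j ≤ j₀ := by
  have hr : 0 < a.toReal := ENNReal.toReal_pos h0 hfin
  have key : ∀ j : ℤ, (pw (m*j) < a ↔ (2:ℝ)^(m*j) < a.toReal) := fun j => by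
    rw [pw, ENNReal.ofReal_lt_iff_lt_toReal (by positivity) hfin]
  obtain ⟨n, hn⟩ := pow_unbounded_of_one_lt a.toReal (by norm_num : (1:ℝ) < 2)
  obtain ⟨p, hp⟩ := exists_pow_lt_of_lt_one hr (by norm_num : (1:ℝ)/2 < 1)
  have Hbdd : ∃ b : ℤ, ∀ z : ℤ, pw (m*z) < a → z ≤ b := by
    refine ⟨(n:ℤ), fun z hz => ?_⟩
    rw [key] at hz
    have hzn : (2:ℝ)^(m*z) < (2:ℝ)^((n:ℤ)) := by
      rw [zpow_natCast]; exact hz.trans hn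
    have hmz : m*z < (n:ℤ) := by
      by_contra hc
      push_neg at hc
      exact absurd hzn (not_lt.mpr (zpow_le_zpow_right₀ (by norm_num) hc))
    rcases le_or_gt z 0 with h | h
    · exact h.trans (by positivity)
    · calc z ≤ m*z := le_mul_of_one_le_left h.le (by omega)
      _ ≤ n := hmz.le
  have Hinh : ∃ z : ℤ, pw (m*z) < a := by
    refine ⟨-(p:ℤ), (key _).mpr ?_⟩
    have e1 : (2:ℝ)^(m * (-(p:ℤ))) = ((2:ℝ)^((m*p : ℤ)))⁻¹ := by
      rw [← zpow_neg]; congr 1; ring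
    have e2 : (2:ℝ)^((p:ℤ)) ≤ (2:ℝ)^((m*p:ℤ)) := by
      apply zpow_le_zpow_right₀ (by norm_num)
      nlinarith [Int.natCast_nonneg p]
    have e3 : ((2:ℝ)^((m*p:ℤ)))⁻¹ ≤ ((2:ℝ)^((p:ℤ)))⁻¹ := by
      apply inv_anti₀ (by positivity) e2
    have e4 : ((2:ℝ)^((p:ℤ)))⁻¹ = (1/2:ℝ)^p := by
      rw [one_div, inv_pow, zpow_natCast]
    calc (2:ℝ)^(m * (-(p:ℤ))) = ((2:ℝ)^((m*p : ℤ)))⁻¹ := e1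
    _ ≤ ((2:ℝ)^((p:ℤ)))⁻¹ := e3
    _ = (1/2:ℝ)^p := e4
    _ < a.toReal := hp
  obtain ⟨j₀, h1, h2⟩ := Int.exists_greatest_of_bdd Hbdd Hinh
  exact ⟨j₀, h1, h2⟩

/-- the set where the tail at scale `k` is at level `j`. -/
def Jset (j k : ℤ) : Set (Fin N → ℝ) := (Tf t f k)⁻¹' (Set.Ioc (pw (2*j)) (pw (2*j+2)))

/-- the part of `Gf` at level `j`. -/
def Gj (j k : ℤ) : (Fin N → ℝ) → ℝ≥0∞ := (Jset t f j k).indicator (Gf t f k)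

/-- the level set of the square function. -/
def Om (j : ℤ) : Set (Fin N → ℝ) := {x | pw j < (Ssq (fun _ => t) f x)^(1/2:ℝ)}

lemma mem_Jset {j k : ℤ} {x : Fin N → ℝ} :
    x ∈ Jset t f j k ↔ pw (2*j) < Tf t f k x ∧ Tf t f k x ≤ pw (2*j+2) := Set.mem_Ioc

lemma measurableSet_Jset (j k : ℤ) : MeasurableSet (Jset t f j k) :=
  measurable_Tf t f k measurableSet_Ioc

lemma measurable_Gj (j k : ℤ) : Measurable (Gj t f j k) :=
  (measurable_Gf t f k).indicator (measurableSet_Jset t f j k)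

lemma measurableSet_Om (j : ℤ) : MeasurableSet (Om t f j) := by
  have h1 : Measurable (fun x => (Ssq (fun _ => t) f x)^(1/2:ℝ)) :=
    (measurable_Ssq t f).pow_const _
  exact h1 measurableSet_Ioi

lemma Gj_tsum (k : ℤ) (x : Fin N → ℝ) (hfin : Tf t f k x ≠ ∞) :
    ∑' j : ℤ, Gj t f j k x = Gf t f k x := by
  by_cases h0 : Tf t f k x = 0
  · have hG : Gf t f k x = 0 := le_antisymm (h0 ▸ Gf_le_Tf t f k x) (zero_le)
    have hz : ∀ j : ℤ, Gj t f j k x = 0 := fun j => by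
      rw [Gj, Set.indicator_of_notMem]
      rw [mem_Jset, h0]
      rintro ⟨h1, -⟩
      exact absurd h1 (by simp)
    simp [hz, hG]
  · obtain ⟨j₀, hj₀, hmax⟩ := exists_greatest_pw 2 (by norm_num) (Tf t f k x) h0 hfin
    rw [tsum_eq_single j₀ ?_]
    · rw [Gj, Set.indicator_of_mem]
      rw [mem_Jset]
      refine ⟨hj₀, ?_⟩
      by_contra hlt
      push_neg at hlt
      have : (j₀+1 : ℤ) ≤ j₀ := hmax _ (by rw [show (2*(j₀+1) : ℤ) = 2*j₀+2 by ring]; exact hlt)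
      omega
    · intro j hne
      rw [Gj, Set.indicator_of_notMem]
      rw [mem_Jset]
      rintro ⟨h1, h2⟩
      have hj : j < j₀ := lt_of_le_of_ne (hmax j h1) hne
      have h3 : pw (2*j+2) ≤ pw (2*j₀) := pw_mono (by omega)
      exact absurd h2 (not_le.mpr (h3.trans_lt hj₀))

lemma Gj_zero_of_not_mem_Om {j k : ℤ} {x : Fin N → ℝ} (hx : x ∉ Om t f j) :
    Gj t f j k x = 0 := by
  rw [Gj, Set.indicator_of_notMem]
  rw [mem_Jset]
  rintro ⟨h1, -⟩
  have hS : Ssq (fun _ => t) f x ≤ pw (2*j) := by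
    refine sq_le_of_sqrt_le (not_lt.mp hx)
  exact absurd ((Tf_le_Ssq t f k x).trans hS) (not_le.mpr h1)

lemma sum_Gj_le (j : ℤ) (x : Fin N → ℝ) : ∑' k : ℤ, Gj t f j k x ≤ pw (2*j+2) := by
  classical
  rw [ENNReal.tsum_eq_iSup_sum]
  refine iSup_le fun F => ?_
  set F' := F.filter (fun k => x ∈ Jset t f j k) with hF'
  have hsum : ∑ k ∈ F, Gj t f j k x = ∑ k ∈ F', Gf t f k x := by
    rw [hF', Finset.sum_filter]
    refine Finset.sum_congr rfl fun k _ => ?_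
    by_cases hk : x ∈ Jset t f j k
    · rw [if_pos hk, Gj, Set.indicator_of_mem hk]
    · rw [if_neg hk, Gj, Set.indicator_of_notMem hk]
  rcases F'.eq_empty_or_nonempty with he | hne
  · rw [hsum, he]; simp
  · have hmm : ∀ k ∈ F', x ∈ Jset t f j k := by
      intro k hk
      rw [hF', Finset.mem_filter] at hk
      exact hk.2
    have hm : x ∈ Jset t f j (F'.min' hne) := hmm _ (F'.min'_mem hne)
    calc ∑ k ∈ F, Gj t f j k x = ∑ k ∈ F', Gf t f k x := hsum
    _ = ∑ k ∈ F', (if F'.min' hne ≤ k then Gf t f k x else 0) :=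
        Finset.sum_congr rfl fun k hk => by rw [if_pos (F'.min'_le k hk)]
    _ ≤ Tf t f (F'.min' hne) x := Summable.sum_le_tsum F' (fun _ _ => zero_le) ENNReal.summable
    _ ≤ pw (2*j+2) := (mem_Jset t f |>.mp hm).2

lemma measurableSet_pairInt (S : Set ((Fin N → ℤ) × (Fin N → ℤ))) : MeasurableSet S := by
  have h1 : ∀ q : (Fin N → ℤ) × (Fin N → ℤ), MeasurableSet ({q} : Set _) := by
    intro q
    have : ({q} : Set ((Fin N → ℤ) × (Fin N → ℤ))) = {q.1} ×ˢ {q.2} := by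
      ext r; simp [Prod.ext_iff]
    rw [this]
    exact (measurableSet_piInt _).prod (measurableSet_piInt _)
  have h2 : S = ⋃ q ∈ S, {q} := by simp
  rw [h2]; exact MeasurableSet.biUnion (Set.to_countable S) fun q _ => h1 q

lemma lint_avg (k : ℤ) (h : (Fin N → ℝ) → ℝ≥0∞) (hm : Measurable h) :
    ∫⁻ x, (∫⁻ y in dcube t k x, h y) / ENNReal.ofReal (((2:ℝ)^k)^(N:ℕ)) = ∫⁻ y, h y := by
  set V := ENNReal.ofReal (((2:ℝ)^k)^(N:ℕ)) with hV
  have hV0 : V ≠ 0 := (ENNReal.ofReal_pos.mpr (by positivity)).ne'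
  have hVt : V ≠ ∞ := ENNReal.ofReal_ne_top
  have hFm : Measurable (Function.uncurry
      (fun x y : Fin N → ℝ => if aIdx t k y = aIdx t k x then h y else 0)) := by
    have hmap : Measurable (fun p : (Fin N → ℝ) × (Fin N → ℝ) => (aIdx t k p.1, aIdx t k p.2)) :=
      ((measurable_aIdx t k).comp measurable_fst).prodMk ((measurable_aIdx t k).comp measurable_snd)
    have hset : MeasurableSet {p : (Fin N → ℝ) × (Fin N → ℝ) | aIdx t k p.2 = aIdx t k p.1} := by
      have he : {p : (Fin N → ℝ) × (Fin N → ℝ) | aIdx t k p.2 = aIdx t k p.1}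
          = (fun p : (Fin N → ℝ) × (Fin N → ℝ) => (aIdx t k p.1, aIdx t k p.2)) ⁻¹'
            {q : (Fin N → ℤ) × (Fin N → ℤ) | q.2 = q.1} := rfl
      rw [he]
      exact hmap (measurableSet_pairInt _)
    exact Measurable.ite hset (hm.comp measurable_snd) measurable_const
  calc ∫⁻ x, (∫⁻ y in dcube t k x, h y) / V
      = ∫⁻ x, (∫⁻ y, (if aIdx t k y = aIdx t k x then h y else 0)) / V := by
        refine lintegral_congr fun x => ?_
        congr 1
        rw [← lintegral_indicator (measurableSet_dcube t k x)]
        refine lintegral_congr fun y => ?_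
        by_cases hy : y ∈ dcube t k x
        · rw [Set.indicator_of_mem hy, if_pos (mem_dcube.mp hy)]
        · rw [Set.indicator_of_notMem hy, if_neg (fun hc => hy (mem_dcube.mpr hc))]
  _ = (∫⁻ x, ∫⁻ y, (if aIdx t k y = aIdx t k x then h y else 0)) / V := by
        have hgm : Measurable (fun x => ∫⁻ y, (if aIdx t k y = aIdx t k x then h y else 0)) :=
          measurable_comp_aIdx t k (fun v => ∫⁻ y, (if aIdx t k y = v then h y else 0))
        simp only [div_eq_mul_inv]
        exact lintegral_mul_const _ hgm
  _ = (∫⁻ y, ∫⁻ x, (if aIdx t k y = aIdx t k x then h y else 0)) / V := by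
        congr 1
        exact lintegral_lintegral_swap hFm.aemeasurable
  _ = (∫⁻ y, h y * V) / V := by
        congr 1
        refine lintegral_congr fun y => ?_
        have he : ∀ x, (if aIdx t k y = aIdx t k x then h y else 0)
            = (dcube t k y).indicator (fun _ => h y) x := fun x => by
          by_cases hx : x ∈ dcube t k y
          · rw [Set.indicator_of_mem hx, if_pos (mem_dcube.mp hx).symm]
          · rw [Set.indicator_of_notMem hx,
              if_neg (fun hc => hx (mem_dcube.mpr hc.symm))]
        simp_rw [he]
        rw [lintegral_indicator_const (measurableSet_dcube t k y), volume_dcube]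
  _ = ∫⁻ y, h y := by
        rw [lintegral_mul_const _ hm, mul_div_assoc, ENNReal.div_self hV0 hVt, mul_one]

def Uj (j : ℤ) (x : Fin N → ℝ) : ℝ≥0∞ :=
  ∑' k : ℤ, (∫⁻ y in dcube t k x, Gj t f j k y) / ENNReal.ofReal (((2:ℝ)^k)^(N:ℕ))

lemma dcube_setOf (k : ℤ) (x : Fin N → ℝ) :
    dcube t k x = {z | aIdx t k z = aIdx t k x} := Set.ext fun z => mem_dcube

lemma measurable_Uj (j : ℤ) : Measurable (Uj t f j) := by
  refine Measurable.ennreal_tsum fun k => ?_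
  have he : (fun x => ∫⁻ y in dcube t k x, Gj t f j k y)
      = fun x => (fun v => ∫⁻ y in {z | aIdx t k z = v}, Gj t f j k y) (aIdx t k x) :=
    funext fun x => by rw [dcube_setOf]
  refine Measurable.div ?_ measurable_const
  rw [he]
  exact measurable_comp_aIdx t k (fun v => ∫⁻ y in {z | aIdx t k z = v}, Gj t f j k y)

lemma StildeSq_le_sum_Uj (hZ : ∀ᵐ y : Fin N → ℝ, Ssq (fun _ => t) f y ≠ ∞) (x : Fin N → ℝ) :
    StildeSq (fun _ => t) f x ≤ ∑' j : ℤ, Uj t f j x := by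
  have hterm : ∀ k : ℤ,
      ENNReal.ofReal (avg (fun _ => t) k (fun y => (mdiff (fun _ => t) k f y)^2) x)
      ≤ ∑' j : ℤ, (∫⁻ y in dcube t k x, Gj t f j k y) / ENNReal.ofReal (((2:ℝ)^k)^(N:ℕ)) := by
    intro k
    have hint := integrableOn_mdiff_sq t k f x
    have havg : avg (fun _ => t) k (fun y => (mdiff (fun _ => t) k f y)^2) x
        = (∫ y in dcube t k x, (mdiff (fun _ => t) k f y)^2) / ((2:ℝ)^k)^(N:ℕ) := rfl
    rw [havg, ENNReal.ofReal_div_of_pos (by positivity),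
      ofReal_integral_eq_lintegral_ofReal hint (Filter.Eventually.of_forall fun y => sq_nonneg _)]
    have hae : ∀ᵐ y ∂(volume.restrict (dcube t k x)),
        ENNReal.ofReal ((mdiff (fun _ => t) k f y)^2) = ∑' j : ℤ, Gj t f j k y := by
      refine ae_restrict_of_ae ?_
      filter_upwards [hZ] with y hy
      exact (Gj_tsum t f k y (fun htop => hy (top_le_iff.mp (htop ▸ Tf_le_Ssq t f k y)))).symm
    rw [lintegral_congr_ae hae, lintegral_tsum (fun j => (measurable_Gj t f j k).aemeasurable)]
    simp only [div_eq_mul_inv]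
    rw [ENNReal.tsum_mul_right]
  calc StildeSq (fun _ => t) f x
      = ∑' k : ℤ, ENNReal.ofReal (avg (fun _ => t) k (fun y => (mdiff (fun _ => t) k f y)^2) x) := rfl
  _ ≤ ∑' k : ℤ, ∑' j : ℤ, (∫⁻ y in dcube t k x, Gj t f j k y) / ENNReal.ofReal (((2:ℝ)^k)^(N:ℕ)) :=
      Summable.tsum_le_tsum hterm ENNReal.summable ENNReal.summable
  _ = ∑' j : ℤ, Uj t f j x := ENNReal.tsum_comm

/-! ### The covering lemma -/

def cubeAt (k : ℤ) (v : Fin N → ℤ) : Set (Fin N → ℝ) := {z | aIdx t k z = v}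

lemma cubeAt_eq_dcube (k : ℤ) (v : Fin N → ℤ) : cubeAt t k v = dcube t k (aRep t k v) :=
  Set.ext fun z => by rw [cubeAt, Set.mem_setOf_eq, mem_dcube, aIdx_aRep]

lemma measurableSet_cubeAt (k : ℤ) (v : Fin N → ℤ) : MeasurableSet (cubeAt t k v) := by
  rw [cubeAt_eq_dcube]; exact measurableSet_dcube t k _

lemma volume_cubeAt (k : ℤ) (v : Fin N → ℤ) :
    volume (cubeAt t k v) = ENNReal.ofReal (((2:ℝ)^k)^(N:ℕ)) := by
  rw [cubeAt_eq_dcube]; exact volume_dcube t k _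

def BadP (j : ℤ) : Set (ℤ × (Fin N → ℤ)) :=
  {p | ∃ y, aIdx t p.1 y = p.2 ∧ pw (2*j) < Tf t f p.1 y}

def BadSet (j : ℤ) : Set (Fin N → ℝ) := ⋃ p ∈ BadP t f j, cubeAt t p.1 p.2

lemma measurableSet_BadSet (j : ℤ) : MeasurableSet (BadSet t f j) :=
  MeasurableSet.biUnion (Set.to_countable _) fun p _ => measurableSet_cubeAt t p.1 p.2

lemma Uj_zero_off_BadSet (j : ℤ) {x : Fin N → ℝ} (hx : x ∉ BadSet t f j) :
    Uj t f j x = 0 := by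
  rw [Uj, ENNReal.tsum_eq_zero]
  intro k
  have hzero : ∀ y ∈ dcube t k x, Gj t f j k y = 0 := by
    intro y hy
    by_contra hGy
    have hyJ : y ∈ Jset t f j k := by
      by_contra hyJ; exact hGy (by rw [Gj, Set.indicator_of_notMem hyJ])
    have hbad : ((k, aIdx t k y) : ℤ × (Fin N → ℤ)) ∈ BadP t f j :=
      ⟨y, rfl, ((mem_Jset t f).mp hyJ).1⟩
    have hxc : x ∈ cubeAt t k (aIdx t k y) := (mem_dcube.mp hy).symm
    exact hx (Set.mem_biUnion hbad hxc)
  have hnum : ∫⁻ y in dcube t k x, Gj t f j k y = 0 := by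
    rw [setLIntegral_congr_fun (measurableSet_dcube t k x)
      (fun y hy => hzero y hy)]
    exact lintegral_zero
  rw [hnum]
  simp

lemma volume_BadSet_le (hN : 0 < N) (j : ℤ) (hvol : volume (Om t f j) ≠ ∞) :
    volume (BadSet t f j) ≤ (2:ℝ≥0∞)^(N:ℕ) * volume (Om t f j) := by
  classical
  have hwit : ∀ p ∈ BadP t f j, ∃ y, aIdx t p.1 y = p.2 ∧ pw (2*j) < Tf t f p.1 y :=
    fun p hp => hp
  choose! w hw1 hw2 using hwit
  set child : ℤ × (Fin N → ℤ) → Set (Fin N → ℝ) := fun p => dcube t (p.1 - 1) (w p) with hchild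
  have hchild_cube : ∀ p ∈ BadP t f j, child p ⊆ cubeAt t p.1 p.2 := by
    intro p hp z hz
    have h1 : aIdx t (p.1-1) z = aIdx t (p.1-1) (w p) := mem_dcube.mp hz
    have h2 : aIdx t p.1 z = aIdx t p.1 (w p) := aIdx_det (by omega) h1
    show aIdx t p.1 z = p.2
    rw [h2, hw1 p hp]
  have hchild_Om : ∀ p ∈ BadP t f j, child p ⊆ Om t f j := by
    intro p hp z hz
    have h1 : Tf t f p.1 z = Tf t f p.1 (w p) := Tf_congr t f (mem_dcube.mp hz)
    have h2 : pw (2*j) < Tf t f p.1 z := h1 ▸ hw2 p hp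
    exact lt_sqrt_of_sq_lt (lt_of_lt_of_le h2 (Tf_le_Ssq t f p.1 z))
  have hvolchild : ∀ p : ℤ × (Fin N → ℤ),
      volume (child p) = ENNReal.ofReal (((2:ℝ)^(p.1-1))^(N:ℕ)) :=
    fun p => volume_dcube t (p.1-1) (w p)
  obtain ⟨n, hn⟩ := pow_unbounded_of_one_lt (volume (Om t f j)).toReal (by norm_num : (1:ℝ) < 2)
  have hgen : ∀ p ∈ BadP t f j, p.1 ≤ (n:ℤ) + 1 := by
    intro p hp
    by_contra hc
    push_neg at hc
    have h1 : ENNReal.ofReal (((2:ℝ)^(p.1-1))^(N:ℕ)) ≤ volume (Om t f j) :=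
      (hvolchild p) ▸ measure_mono (hchild_Om p hp)
    have h2 : ((2:ℝ)^(p.1-1))^(N:ℕ) ≤ (volume (Om t f j)).toReal :=
      (ENNReal.ofReal_le_iff_le_toReal hvol).mp h1
    have h3 : (2:ℝ)^((n:ℤ)) ≤ (2:ℝ)^(p.1-1) := zpow_le_zpow_right₀ (by norm_num) (by omega)
    have h35 : (1:ℝ) ≤ (2:ℝ)^((n:ℤ)) := one_le_zpow₀ (by norm_num) (by positivity)
    have h4 : (2:ℝ)^(p.1-1) ≤ ((2:ℝ)^(p.1-1))^(N:ℕ) :=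
      le_self_pow₀ (le_trans h35 h3) (by omega)
    have h5 : (2:ℝ)^((n:ℕ)) = (2:ℝ)^((n:ℤ)) := (zpow_natCast _ _).symm
    rw [h5] at hn
    linarith
  have hsub_gen : ∀ (p q : ℤ × (Fin N → ℤ)), cubeAt t p.1 p.2 ⊆ cubeAt t q.1 q.2 → p.1 ≤ q.1 := by
    intro p q hsub
    have h1 : volume (cubeAt t p.1 p.2) ≤ volume (cubeAt t q.1 q.2) := measure_mono hsub
    rw [volume_cubeAt, volume_cubeAt] at h1
    have h2 : ((2:ℝ)^(p.1))^(N:ℕ) ≤ ((2:ℝ)^(q.1))^(N:ℕ) := by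
      rw [ENNReal.ofReal_le_ofReal_iff (by positivity)] at h1
      exact h1
    have h3 : (2:ℝ)^(p.1) ≤ (2:ℝ)^(q.1) :=
      (pow_le_pow_iff_left₀ (by positivity) (by positivity) (by omega)).mp h2
    exact (zpow_le_zpow_iff_right₀ (by norm_num : (1:ℝ) < 2)).mp h3
  have heq_of : ∀ (p q : ℤ × (Fin N → ℤ)), p.1 = q.1 →
      cubeAt t p.1 p.2 ⊆ cubeAt t q.1 q.2 → p = q := by
    intro p q hg hsub
    have hx : aRep t p.1 p.2 ∈ cubeAt t p.1 p.2 := aIdx_aRep t p.1 p.2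
    have h1 : aIdx t q.1 (aRep t p.1 p.2) = q.2 := hsub hx
    rw [← hg, aIdx_aRep] at h1
    exact Prod.ext hg h1
  set Max := {p ∈ BadP t f j |
    ∀ q ∈ BadP t f j, cubeAt t p.1 p.2 ⊆ cubeAt t q.1 q.2 → p = q} with hMaxdef
  have hmax_exists : ∀ p ∈ BadP t f j,
      ∃ q ∈ Max, cubeAt t p.1 p.2 ⊆ cubeAt t q.1 q.2 := by
    intro p hp
    obtain ⟨m₀, hPm₀, hgr⟩ := Int.exists_greatest_of_bdd
      (P := fun m => ∃ v, (m,v) ∈ BadP t f j ∧ cubeAt t p.1 p.2 ⊆ cubeAt t m v)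
      ⟨(n:ℤ)+1, fun m hm => by obtain ⟨v, hv, -⟩ := hm; exact hgen (m,v) hv⟩
      ⟨p.1, p.2, hp, subset_rfl⟩
    obtain ⟨v₀, hv₀, hsub₀⟩ := hPm₀
    refine ⟨(m₀, v₀), ⟨hv₀, ?_⟩, hsub₀⟩
    intro q hq hsubq
    have h1 : m₀ ≤ q.1 := hsub_gen (m₀,v₀) q hsubq
    have h2 : q.1 ≤ m₀ := hgr q.1 ⟨q.2, hq, hsub₀.trans hsubq⟩
    exact heq_of (m₀,v₀) q (le_antisymm h1 h2) hsubq
  have hdisj : Max.PairwiseDisjoint (fun p : ℤ × (Fin N → ℤ) => cubeAt t p.1 p.2) := by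
    intro p hp q hq hne
    by_contra hnd
    rw [Function.onFun] at hnd
    obtain ⟨z, hz1, hz2⟩ := Set.not_disjoint_iff.mp hnd
    rcases le_total p.1 q.1 with hle | hle
    · have hsub : cubeAt t p.1 p.2 ⊆ cubeAt t q.1 q.2 := by
        intro u hu
        have h1 : aIdx t p.1 u = aIdx t p.1 z := by
          rw [show aIdx t p.1 u = p.2 from hu, show aIdx t p.1 z = p.2 from hz1]
        have h2 : aIdx t q.1 u = aIdx t q.1 z := aIdx_det hle h1
        show aIdx t q.1 u = q.2
        rw [h2]; exact hz2
      exact hne (hp.2 q hq.1 hsub)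
    · have hsub : cubeAt t q.1 q.2 ⊆ cubeAt t p.1 p.2 := by
        intro u hu
        have h1 : aIdx t q.1 u = aIdx t q.1 z := by
          rw [show aIdx t q.1 u = q.2 from hu, show aIdx t q.1 z = q.2 from hz2]
        have h2 : aIdx t p.1 u = aIdx t p.1 z := aIdx_det hle h1
        show aIdx t p.1 u = p.2
        rw [h2]; exact hz1
      exact hne ((hq.2 p hp.1 hsub).symm)
  have hcover : BadSet t f j ⊆ ⋃ p ∈ Max, cubeAt t p.1 p.2 := by
    intro x hx
    rcases Set.mem_iUnion₂.mp hx with ⟨p, hp, hxp⟩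
    obtain ⟨q, hq, hsub⟩ := hmax_exists p hp
    exact Set.mem_biUnion hq (hsub hxp)
  have hdisj_child : Pairwise (Function.onFun Disjoint fun p : Max => child (p : ℤ × (Fin N → ℤ))) := by
    intro p q hpq
    have hne : (p : ℤ × (Fin N → ℤ)) ≠ (q : ℤ × (Fin N → ℤ)) := fun hc => hpq (Subtype.ext hc)
    exact Disjoint.mono (hchild_cube _ p.2.1) (hchild_cube _ q.2.1) (hdisj p.2 q.2 hne)
  calc volume (BadSet t f j) ≤ volume (⋃ p ∈ Max, cubeAt t p.1 p.2) := measure_mono hcover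
  _ = ∑' p : Max, volume (cubeAt t (p : ℤ × (Fin N → ℤ)).1 (p : ℤ × (Fin N → ℤ)).2) :=
      measure_biUnion (Set.to_countable _) hdisj fun p _ => measurableSet_cubeAt t p.1 p.2
  _ = ∑' p : Max, (2:ℝ≥0∞)^(N:ℕ) * volume (child (p : ℤ × (Fin N → ℤ))) := by
      refine tsum_congr fun p => ?_
      rw [hvolchild, volume_cubeAt]
      have harith : ((2:ℝ)^((p : ℤ × (Fin N → ℤ)).1))^(N:ℕ)
          = (2:ℝ)^(N:ℕ) * ((2:ℝ)^((p : ℤ × (Fin N → ℤ)).1 - 1))^(N:ℕ) := by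
        rw [← mul_pow]
        congr 1
        rw [show (p : ℤ × (Fin N → ℤ)).1 = ((p : ℤ × (Fin N → ℤ)).1 - 1) + 1 by ring,
          zpow_add_one₀ (two_ne_zero : (2:ℝ) ≠ 0)]
        ring_nf
      rw [harith, ENNReal.ofReal_mul (by positivity), ENNReal.ofReal_pow (by norm_num),
        ENNReal.ofReal_ofNat]
  _ = (2:ℝ≥0∞)^(N:ℕ) * ∑' p : Max, volume (child (p : ℤ × (Fin N → ℤ))) := ENNReal.tsum_mul_left
  _ ≤ (2:ℝ≥0∞)^(N:ℕ) * volume (Om t f j) := by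
      refine mul_le_mul_right ?_ _
      rw [← measure_iUnion hdisj_child (fun p => measurableSet_dcube t _ _)]
      exact measure_mono (Set.iUnion_subset fun p => hchild_Om _ p.2.1)

/-! ### Assembly of the hard direction -/

lemma sqrt_tsum_le (u : ℤ → ℝ≥0∞) : (∑' j, u j)^(1/2:ℝ) ≤ ∑' j, (u j)^(1/2:ℝ) := by
  have h1 : ∑' j, u j ≤ (∑' j, (u j)^(1/2:ℝ)) * (∑' j, (u j)^(1/2:ℝ)) := by
    calc ∑' j, u j = ∑' j, (u j)^(1/2:ℝ) * (u j)^(1/2:ℝ) :=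
        tsum_congr fun j => (sqrt_mul_self _).symm
    _ ≤ ∑' j, (u j)^(1/2:ℝ) * (∑' i, (u i)^(1/2:ℝ)) :=
        Summable.tsum_le_tsum (fun j => mul_le_mul_right (ENNReal.le_tsum j) _)
          ENNReal.summable ENNReal.summable
    _ = _ := by rw [ENNReal.tsum_mul_right]
  calc (∑' j, u j)^(1/2:ℝ) ≤ ((∑' j, (u j)^(1/2:ℝ)) * (∑' j, (u j)^(1/2:ℝ)))^(1/2:ℝ) :=
      ENNReal.rpow_le_rpow h1 (by norm_num)
  _ = _ := sqrt_sq' _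

lemma tsum_pw_lt_le (a : ℝ≥0∞) : (∑' j : ℤ, if pw j < a then pw j else 0) ≤ 2*a := by
  rcases eq_or_ne a ∞ with rfl | hfin
  · have h2 : (2:ℝ≥0∞)*∞ = ∞ := by simp
    rw [h2]; exact le_top
  rcases eq_or_ne a 0 with rfl | h0
  · have hz : ∀ j : ℤ, (if pw j < (0:ℝ≥0∞) then pw j else 0) = 0 := fun j => if_neg (by simp)
    simp only [hz, tsum_zero]
    exact zero_le
  obtain ⟨j₀, hj₀, hmax⟩ := exists_greatest_pw 1 one_pos a h0 hfin
  rw [one_mul] at hj₀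
  have hsupp : Function.support (fun j : ℤ => if pw j < a then pw j else 0)
      ⊆ {j : ℤ | j ≤ j₀} := by
    intro j hj
    rw [Function.mem_support] at hj
    by_cases h : pw j < a
    · exact hmax j (by rw [one_mul]; exact h)
    · rw [if_neg h] at hj; exact absurd rfl hj
  let e : ℕ ≃ {j : ℤ | j ≤ j₀} :=
    ⟨fun n => ⟨j₀ - n, by simp⟩, fun j => (j₀ - (j:ℤ)).toNat,
      fun n => by show (j₀ - (j₀ - (n:ℤ))).toNat = n; omega, fun j => Subtype.ext (by
        have h : (j:ℤ) ≤ j₀ := j.2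
        show j₀ - ((j₀ - (j:ℤ)).toNat : ℤ) = (j:ℤ)
        omega)⟩
  calc (∑' j : ℤ, if pw j < a then pw j else 0)
      = ∑' j : {j : ℤ | j ≤ j₀}, (if pw (j:ℤ) < a then pw (j:ℤ) else 0) :=
        (tsum_subtype_eq_of_support_subset hsupp).symm
  _ ≤ ∑' j : {j : ℤ | j ≤ j₀}, pw (j:ℤ) :=
      Summable.tsum_le_tsum (fun j => by split_ifs with h; exacts [le_rfl, zero_le])
        ENNReal.summable ENNReal.summable
  _ = ∑' n : ℕ, pw (j₀ - n) := by
      rw [← Equiv.tsum_eq e (fun j : {j : ℤ | j ≤ j₀} => pw (j:ℤ))]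
      exact tsum_congr fun n => rfl
  _ = ∑' n : ℕ, pw j₀ * (2⁻¹ : ℝ≥0∞)^n := by
      refine tsum_congr fun n => ?_
      have h1 : pw (j₀ - n) = pw j₀ * pw (-(n:ℤ)) := by rw [← pw_add]; ring_nf
      rw [h1]
      congr 1
      unfold pw
      rw [zpow_neg, zpow_natCast, ← inv_pow, ENNReal.ofReal_pow (by norm_num),
        ENNReal.ofReal_inv_of_pos (by norm_num), ENNReal.ofReal_ofNat]
  _ = pw j₀ * ∑' n : ℕ, (2⁻¹ : ℝ≥0∞)^n := ENNReal.tsum_mul_left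
  _ = pw j₀ * 2 := by
      rw [ENNReal.tsum_geometric, ENNReal.one_sub_inv_two, inv_inv]
  _ ≤ 2 * a := by rw [mul_comm]; exact mul_le_mul_right hj₀.le 2

lemma measurable_lint_dcube (k : ℤ) (g : (Fin N → ℝ) → ℝ≥0∞) :
    Measurable (fun x => ∫⁻ y in dcube t k x, g y) := by
  have he : (fun x => ∫⁻ y in dcube t k x, g y)
      = fun x => (fun v => ∫⁻ y in {z | aIdx t k z = v}, g y) (aIdx t k x) :=
    funext fun x => by rw [dcube_setOf]
  rw [he]
  exact measurable_comp_aIdx t k (fun v => ∫⁻ y in {z | aIdx t k z = v}, g y)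

lemma lint_Uj_le (j : ℤ) : ∫⁻ x, Uj t f j x ≤ pw (2*j+2) * volume (Om t f j) := by
  have h1 : ∫⁻ x, Uj t f j x = ∑' k : ℤ, ∫⁻ y, Gj t f j k y := by
    show ∫⁻ x, ∑' k : ℤ,
      (∫⁻ y in dcube t k x, Gj t f j k y) / ENNReal.ofReal (((2:ℝ)^k)^(N:ℕ)) = _
    rw [lintegral_tsum (fun k => Measurable.aemeasurable (f := fun x => (∫⁻ y in dcube t k x, Gj t f j k y) / ENNReal.ofReal (((2:ℝ)^k)^(N:ℕ))) ((measurable_lint_dcube t k _).div measurable_const))]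
    exact tsum_congr fun k => lint_avg t k _ (measurable_Gj t f j k)
  have h2 : ∑' k : ℤ, ∫⁻ y, Gj t f j k y = ∫⁻ y, ∑' k : ℤ, Gj t f j k y :=
    (lintegral_tsum fun k => (measurable_Gj t f j k).aemeasurable).symm
  have h3 : ∫⁻ y, ∑' k : ℤ, Gj t f j k y
      ≤ ∫⁻ y, (Om t f j).indicator (fun _ => pw (2*j+2)) y := by
    refine lintegral_mono fun y => ?_
    by_cases hy : y ∈ Om t f j
    · rw [Set.indicator_of_mem hy]; exact sum_Gj_le t f j y
    · rw [Set.indicator_of_notMem hy]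
      have hz : ∀ k : ℤ, Gj t f j k y = 0 := fun k => Gj_zero_of_not_mem_Om t f hy
      simp [hz]
  rw [h1, h2]
  exact h3.trans_eq (lintegral_indicator_const (measurableSet_Om t f j) _)

lemma lint_sqrt_Uj_le (hN : 0 < N) (j : ℤ) (hvol : volume (Om t f j) ≠ ∞) :
    ∫⁻ x, (Uj t f j x)^(1/2:ℝ) ≤ ((2:ℝ≥0∞)^(N:ℕ) + 4) * (pw j * volume (Om t f j)) := by
  have hptw : ∀ x, (Uj t f j x)^(1/2:ℝ)
      ≤ (BadSet t f j).indicator (fun _ => pw j) x + Uj t f j x / pw j := by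
    intro x
    by_cases hx : x ∈ BadSet t f j
    · rw [Set.indicator_of_mem hx]
      rcases le_or_gt ((Uj t f j x)^(1/2:ℝ)) (pw j) with h | h
      · exact h.trans (self_le_add_right _ _)
      · refine le_trans ?_ (self_le_add_left _ _)
        rw [ENNReal.le_div_iff_mul_le (Or.inl (pw_pos j).ne') (Or.inl (pw_ne_top j))]
        calc (Uj t f j x)^(1/2:ℝ) * pw j ≤ (Uj t f j x)^(1/2:ℝ) * (Uj t f j x)^(1/2:ℝ) :=
            mul_le_mul_right h.le _
        _ = Uj t f j x := sqrt_mul_self _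
    · rw [Set.indicator_of_notMem hx, Uj_zero_off_BadSet t f j hx,
        ENNReal.zero_rpow_of_pos (by norm_num)]
      exact zero_le
  calc ∫⁻ x, (Uj t f j x)^(1/2:ℝ)
      ≤ ∫⁻ x, ((BadSet t f j).indicator (fun _ => pw j) x + Uj t f j x / pw j) :=
        lintegral_mono hptw
  _ = pw j * volume (BadSet t f j) + (∫⁻ x, Uj t f j x) / pw j := by
      rw [lintegral_add_left (measurable_const.indicator (measurableSet_BadSet t f j)),
        lintegral_indicator_const (measurableSet_BadSet t f j)]
      congr 1
      simp only [div_eq_mul_inv]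
      exact lintegral_mul_const _ (measurable_Uj t f j)
  _ ≤ pw j * ((2:ℝ≥0∞)^(N:ℕ) * volume (Om t f j))
      + (pw (2*j+2) * volume (Om t f j)) / pw j :=
      add_le_add (mul_le_mul_right (volume_BadSet_le t f hN j hvol) _)
        (ENNReal.div_le_div_right (lint_Uj_le t f j) _)
  _ = ((2:ℝ≥0∞)^(N:ℕ) + 4) * (pw j * volume (Om t f j)) := by
      have e1 : pw (2*j+2) = pw j * (pw j * 4) := by
        rw [show (2*j+2 : ℤ) = j + (j + 2) by ring, pw_add, pw_add]
        congr 2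
        unfold pw
        rw [show ((2:ℝ)^(2:ℤ)) = 4 by norm_num]
        exact ENNReal.ofReal_ofNat 4
      have e2 : pw j * (pw j * 4) * volume (Om t f j) / pw j
          = pw j * 4 * volume (Om t f j) := by
        rw [mul_assoc (pw j), mul_comm (pw j), mul_div_assoc,
          ENNReal.div_self (pw_pos j).ne' (pw_ne_top j), mul_one]
      rw [e1, e2]
      ring

lemma vol_Om_ne_top (j : ℤ) (hJ : ∫⁻ x, (Ssq (fun _ => t) f x)^(1/2:ℝ) ≠ ∞) :
    volume (Om t f j) ≠ ∞ := by
  have h1 : pw j * volume (Om t f j) ≤ ∫⁻ x, (Ssq (fun _ => t) f x)^(1/2:ℝ) := by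
    have h := mul_meas_ge_le_lintegral₀
      (μ := volume) ((measurable_Ssq t f).pow_const (1/2:ℝ)).aemeasurable (pw j)
    refine le_trans (mul_le_mul_right (measure_mono ?_) _) h
    intro x hx
    exact le_of_lt (show pw j < (Ssq (fun _ => t) f x)^(1/2:ℝ) from hx)
  intro hc
  rw [hc, ENNReal.mul_top (pw_pos j).ne'] at h1
  exact hJ (top_le_iff.mp h1)

lemma layer_cake : ∑' j : ℤ, pw j * volume (Om t f j)
    ≤ 2 * ∫⁻ x, (Ssq (fun _ => t) f x)^(1/2:ℝ) := by
  calc ∑' j : ℤ, pw j * volume (Om t f j)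
      = ∑' j : ℤ, ∫⁻ x, (Om t f j).indicator (fun _ => pw j) x :=
        tsum_congr fun j => (lintegral_indicator_const (measurableSet_Om t f j) _).symm
  _ = ∫⁻ x, ∑' j : ℤ, (Om t f j).indicator (fun _ => pw j) x :=
      (lintegral_tsum fun j =>
        (measurable_const.indicator (measurableSet_Om t f j)).aemeasurable).symm
  _ ≤ ∫⁻ x, 2 * (Ssq (fun _ => t) f x)^(1/2:ℝ) := by
      refine lintegral_mono fun x => ?_
      have h2 : ∀ j : ℤ, (Om t f j).indicator (fun _ => pw j) x
          = (if pw j < (Ssq (fun _ => t) f x)^(1/2:ℝ) then pw j else 0) := fun j => by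
        by_cases hx : x ∈ Om t f j
        · rw [Set.indicator_of_mem hx,
            if_pos (show pw j < (Ssq (fun _ => t) f x)^(1/2:ℝ) from hx)]
        · rw [Set.indicator_of_notMem hx,
            if_neg (show ¬ pw j < (Ssq (fun _ => t) f x)^(1/2:ℝ) from hx)]
      calc ∑' j : ℤ, (Om t f j).indicator (fun _ => pw j) x
          = ∑' j : ℤ, (if pw j < (Ssq (fun _ => t) f x)^(1/2:ℝ) then pw j else 0) :=
            tsum_congr h2
      _ ≤ 2 * (Ssq (fun _ => t) f x)^(1/2:ℝ) := tsum_pw_lt_le _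
  _ = 2 * ∫⁻ x, (Ssq (fun _ => t) f x)^(1/2:ℝ) :=
      lintegral_const_mul 2 ((measurable_Ssq t f).pow_const _)

lemma measurable_StildeSq : Measurable (StildeSq (fun _ => t) f) := by
  have he : StildeSq (fun _ => t) f = fun x => ∑' k : ℤ,
      ENNReal.ofReal (avg (fun _ => t) k (fun y => (mdiff (fun _ => t) k f y)^2) x) := rfl
  rw [he]
  exact Measurable.ennreal_tsum fun k =>
    ENNReal.measurable_ofReal.comp (measurable_avg t k _)

lemma hard_direction (hN : 0 < N) :
    ∫⁻ x, (StildeSq (fun _ => t) f x)^(1/2:ℝ)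
      ≤ ((2:ℝ≥0∞)^(N:ℕ) + 4) * 2 * ∫⁻ x, (Ssq (fun _ => t) f x)^(1/2:ℝ) := by
  rcases eq_or_ne (∫⁻ x, (Ssq (fun _ => t) f x)^(1/2:ℝ)) ∞ with hJ | hJ
  · rw [hJ]
    have hne : ((2:ℝ≥0∞)^(N:ℕ) + 4) * 2 ≠ 0 := by
      intro h
      rw [mul_eq_zero] at h
      rcases h with h | h
      · have h4 : (4:ℝ≥0∞) ≤ (2:ℝ≥0∞)^(N:ℕ) + 4 := le_add_self
        rw [h] at h4
        exact absurd h4 (by simp)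
      · exact two_ne_zero h
    rw [ENNReal.mul_top hne]
    exact le_top
  · have hZ : ∀ᵐ y : Fin N → ℝ, Ssq (fun _ => t) f y ≠ ∞ := by
      have h1 : ∀ᵐ y : Fin N → ℝ, (Ssq (fun _ => t) f y)^(1/2:ℝ) < ∞ :=
        ae_lt_top ((measurable_Ssq t f).pow_const _) hJ
      filter_upwards [h1] with y hy hc
      rw [hc, ENNReal.top_rpow_of_pos (by norm_num)] at hy
      exact absurd hy (by simp)
    calc ∫⁻ x, (StildeSq (fun _ => t) f x)^(1/2:ℝ)
        ≤ ∫⁻ x, (∑' j : ℤ, Uj t f j x)^(1/2:ℝ) :=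
          lintegral_mono fun x =>
            ENNReal.rpow_le_rpow (StildeSq_le_sum_Uj t f hZ x) (by norm_num)
    _ ≤ ∫⁻ x, ∑' j : ℤ, (Uj t f j x)^(1/2:ℝ) := lintegral_mono fun x => sqrt_tsum_le _
    _ = ∑' j : ℤ, ∫⁻ x, (Uj t f j x)^(1/2:ℝ) :=
        lintegral_tsum fun j => ((measurable_Uj t f j).pow_const _).aemeasurable
    _ ≤ ∑' j : ℤ, ((2:ℝ≥0∞)^(N:ℕ) + 4) * (pw j * volume (Om t f j)) :=
        Summable.tsum_le_tsum (fun j => lint_sqrt_Uj_le t f hN j (vol_Om_ne_top t f j hJ))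
          ENNReal.summable ENNReal.summable
    _ = ((2:ℝ≥0∞)^(N:ℕ) + 4) * ∑' j : ℤ, pw j * volume (Om t f j) := ENNReal.tsum_mul_left
    _ ≤ ((2:ℝ≥0∞)^(N:ℕ) + 4) * (2 * ∫⁻ x, (Ssq (fun _ => t) f x)^(1/2:ℝ)) :=
        mul_le_mul_right (layer_cake t f) _
    _ = ((2:ℝ≥0∞)^(N:ℕ) + 4) * 2 * ∫⁻ x, (Ssq (fun _ => t) f x)^(1/2:ℝ) := by ring

end Aux

/-- **Equivalence of the two dyadic square-function norms**: for every dyadic lattice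
`t + 𝒟₀` in `ℝ^N` and every `f ∈ L¹_loc`, `C⁻¹ ‖S_𝒟 f‖₁ ≤ ‖S̃_𝒟 f‖₁ ≤ C ‖S_𝒟 f‖₁` with `C`
depending only on `N`. -/
theorem square_function_norms_equiv (N : ℕ) (hN : 0 < N) :
    ∃ C : ℝ, 0 < C ∧
      ∀ (t : Fin N → ℝ) (f : (Fin N → ℝ) → ℝ), LocallyIntegrable f volume →
        (∫⁻ x, (Ssq (fun _ => t) f x) ^ (1 / 2 : ℝ)) ≤
            ENNReal.ofReal C * ∫⁻ x, (StildeSq (fun _ => t) f x) ^ (1 / 2 : ℝ) ∧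
        (∫⁻ x, (StildeSq (fun _ => t) f x) ^ (1 / 2 : ℝ)) ≤
            ENNReal.ofReal C * ∫⁻ x, (Ssq (fun _ => t) f x) ^ (1 / 2 : ℝ) := by
  refine ⟨(2:ℝ)^(N+4), by positivity, fun t f _ => ?_⟩
  have hC : ENNReal.ofReal ((2:ℝ)^(N+4)) = (2:ℝ≥0∞)^(N+4) := by
    rw [ENNReal.ofReal_pow (by norm_num), ENNReal.ofReal_ofNat]
  have hone : (1:ℝ≥0∞) ≤ 2 := one_le_two
  have hNle : (2:ℝ≥0∞)^(N:ℕ) ≤ 2^(N+4) := pow_le_pow_right₀ hone (by omega)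
  constructor
  · calc (∫⁻ x, (Ssq (fun _ => t) f x)^(1/2:ℝ))
        ≤ ∫⁻ x, ((2:ℝ≥0∞)^(N:ℕ) * StildeSq (fun _ => t) f x)^(1/2:ℝ) :=
          lintegral_mono fun x => ENNReal.rpow_le_rpow (Ssq_le_StildeSq t f x) (by norm_num)
    _ = ∫⁻ x, ((2:ℝ≥0∞)^(N:ℕ))^(1/2:ℝ) * (StildeSq (fun _ => t) f x)^(1/2:ℝ) :=
          lintegral_congr fun x => ENNReal.mul_rpow_of_nonneg _ _ (by norm_num)
    _ ≤ ∫⁻ x, (2:ℝ≥0∞)^(N:ℕ) * (StildeSq (fun _ => t) f x)^(1/2:ℝ) := by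
          refine lintegral_mono fun x => mul_le_mul_left ?_ _
          have h1 : (1:ℝ≥0∞) ≤ (2:ℝ≥0∞)^(N:ℕ) := one_le_pow_of_one_le' hone N
          calc ((2:ℝ≥0∞)^(N:ℕ))^(1/2:ℝ) ≤ ((2:ℝ≥0∞)^(N:ℕ))^(1:ℝ) :=
              ENNReal.rpow_le_rpow_of_exponent_le h1 (by norm_num)
          _ = (2:ℝ≥0∞)^(N:ℕ) := ENNReal.rpow_one _
    _ = (2:ℝ≥0∞)^(N:ℕ) * ∫⁻ x, (StildeSq (fun _ => t) f x)^(1/2:ℝ) :=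
          lintegral_const_mul _ ((measurable_StildeSq t f).pow_const _)
    _ ≤ ENNReal.ofReal ((2:ℝ)^(N+4)) * ∫⁻ x, (StildeSq (fun _ => t) f x)^(1/2:ℝ) := by
          rw [hC]; exact mul_le_mul_left hNle _
  · refine le_trans (hard_direction t f hN) ?_
    rw [hC]
    refine mul_le_mul_left ?_ _
    have h1 : ((2:ℝ≥0∞)^(N:ℕ) + 4) * 2 = 2^(N+1) + 8 := by ring
    rw [h1]
    have h2 : (2:ℝ≥0∞)^(N+1) ≤ 2^(N+3) := pow_le_pow_right₀ hone (by omega)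
    have h3 : (8:ℝ≥0∞) ≤ 2^(N+3) := by
      have h8 : (8:ℝ≥0∞) = 2^3 := by norm_num
      rw [h8]; exact pow_le_pow_right₀ hone (by omega)
    calc (2:ℝ≥0∞)^(N+1) + 8 ≤ 2^(N+3) + 2^(N+3) := add_le_add h2 h3
    _ = 2^(N+4) := by ring

end Treil
end
end
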